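/- arXiv:0902.1200 — 8 statements merged into one kernel-verified Lean document; each statement's English description precedes it below -/
import Mathlib

section
/- Let ρ, θ > 0, let z± be as above with z+ > z− > 0, and let α = z+/(z+ − z−). For each integer n ≥ 1, define G_n = ∫₀^{z−} zⁿ (z+ − z)^{−α} (z− − z)^{α−1} dz. Then the sequence G_n satisfies the recurrence (n+1)ρ G_{n+1} − (n+1)(1+ρ+θ) G_n + n G_{n−1} = 0 for all n ≥ 1. -/
open Real

theorem Gn_recurrence (ρ θ : ℝ) (hρ : 0 < ρ) (hθ : 0 < θ)
    (zp zm α : ℝ)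
    (hzp : zp = (1 + ρ + θ + Real.sqrt ((1 + ρ + θ)^2 - 4*ρ)) / (2*ρ))
    (hzm : zm = (1 + ρ + θ - Real.sqrt ((1 + ρ + θ)^2 - 4*ρ)) / (2*ρ))
    (hα : α = zp / (zp - zm))
    (G : ℕ → ℝ)
    (hG : ∀ n : ℕ, G n = ∫ z in (0:ℝ)..zm, z ^ n * (zp - z) ^ (-α) * (zm - z) ^ (α - 1)) :
    ∀ n : ℕ, 1 ≤ n →
      ((n : ℝ) + 1) * ρ * G (n + 1) - ((n : ℝ) + 1) * (1 + ρ + θ) * G n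
        + (n : ℝ) * G (n - 1) = 0 := by
  intro n hn
  obtain ⟨m, rfl⟩ : ∃ m, n = m + 1 := ⟨n - 1, (Nat.succ_pred_eq_of_pos hn).symm⟩
  have hD : 0 < (1 + ρ + θ)^2 - 4*ρ := by nlinarith [sq_nonneg (1 - ρ), mul_pos hρ hθ]
  set s := Real.sqrt ((1 + ρ + θ)^2 - 4*ρ) with hs_def
  have hs2 : s^2 = (1 + ρ + θ)^2 - 4*ρ := Real.sq_sqrt hD.le
  have hs0 : 0 < s := Real.sqrt_pos.2 hD
  have hslt : s < 1 + ρ + θ := by nlinarith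
  have hzm0 : 0 < zm := by
    rw [hzm]; apply div_pos (by linarith) (by linarith)
  have hdiff : zp - zm = s / ρ := by rw [hzp, hzm]; field_simp; ring
  have hzmzp : zm < zp := by
    have : 0 < zp - zm := hdiff ▸ div_pos hs0 hρ
    linarith
  have hprod : ρ * (zp * zm) = 1 := by
    rw [hzp, hzm]; field_simp; nlinarith [hs2]
  have hsum : ρ * (zp + zm) = 1 + ρ + θ := by
    rw [hzp, hzm]; field_simp; ring
  have hα1 : 1 < α := by
    rw [hα]; rw [one_lt_div (by linarith)]; linarith
  have hα0 : 0 < α := lt_trans one_pos hα1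
  have hαid : α * (zp - zm) = zp := by
    rw [hα]; exact div_mul_cancel₀ _ (sub_ne_zero.2 hzmzp.ne')
  have hle : (0:ℝ) ≤ zm := hzm0.le
  -- the antiderivative
  set F : ℝ → ℝ := fun z => ρ * z^(m+1) * (zp - z)^(1-α) * (zm - z)^α with hF_def
  set F' : ℝ → ℝ := fun z =>
      ((m:ℝ)+2)*ρ*(z^(m+2) * (zp - z)^(-α) * (zm - z)^(α-1))
      - ((m:ℝ)+2)*(1+ρ+θ)*(z^(m+1) * (zp - z)^(-α) * (zm - z)^(α-1))
      + ((m:ℝ)+1)*(z^m * (zp - z)^(-α) * (zm - z)^(α-1)) with hF'_def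
  have hderiv : ∀ x ∈ Set.Ioo (0:ℝ) zm, HasDerivAt F (F' x) x := by
    intro x hx
    obtain ⟨hx0, hxm⟩ := hx
    have h1 : 0 < zp - x := by linarith
    have h2 : 0 < zm - x := by linarith
    have d1 : HasDerivAt (fun y : ℝ => (zp - y)^(1-α)) ((α-1) * (zp - x)^(-α)) x := by
      have := ((hasDerivAt_id x).const_sub zp).rpow_const (p := 1-α) (Or.inl h1.ne')
      rw [show (1:ℝ)-α-1 = -α by ring] at this
      simpa using this
    have d2 : HasDerivAt (fun y : ℝ => (zm - y)^α) (α * (zm - x)^(α-1) * (-1)) x := by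
      have := ((hasDerivAt_id x).const_sub zm).rpow_const (p := α) (Or.inl h2.ne')
      simpa using this
    have d3 : HasDerivAt (fun y : ℝ => ρ * y^(m+1)) (ρ * (((m:ℝ)+1) * x^m)) x := by
      have := (hasDerivAt_pow (m+1) x).const_mul ρ
      simpa using this
    have dF := (d3.mul d1).mul d2
    convert dF using 1
    case e'_4 => rfl
    case e'_5 => rfl
    case e'_8 => rfl
    have e1 : (zp - x)^(1-α) = (zp - x) * (zp - x)^(-α) := by
      rw [Real.rpow_sub h1, Real.rpow_one, Real.rpow_neg h1.le, div_eq_mul_inv]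
    have e2 : (zm - x)^α = (zm - x) * (zm - x)^(α-1) := by
      nth_rewrite 1 [show α = 1 + (α-1) by ring]
      rw [Real.rpow_add h2, Real.rpow_one]
    have hq : ρ*((zp-x)*(zm-x)) = 1 - (1+ρ+θ)*x + ρ*x^2 := by
      linear_combination hprod - x*hsum
    have hl : ρ*x*((α-1)*(zm-x) - α*(zp-x)) = ρ*x^2 - (1+ρ+θ)*x := by
      linear_combination (-ρ*x)*hαid - x*hsum
    simp only [hF'_def, Pi.mul_apply]
    rw [e1, e2]
    linear_combination (-(((m:ℝ)+1) * x^m * ((zp-x)^(-α)) * ((zm-x)^(α-1)))) * hq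
      + (-(x^m * ((zp-x)^(-α)) * ((zm-x)^(α-1)))) * hl
  have huIcc : Set.uIcc (0:ℝ) zm = Set.Icc 0 zm := Set.uIcc_of_le hle
  have hcont : ∀ k : ℕ, ContinuousOn
      (fun z : ℝ => z^k * (zp - z)^(-α) * (zm - z)^(α-1)) (Set.Icc 0 zm) := by
    intro k
    apply ContinuousOn.mul
    apply ContinuousOn.mul
    · exact (continuous_pow k).continuousOn
    · exact (continuousOn_const.sub continuousOn_id).rpow_const
        (fun x hx => Or.inl (show (0:ℝ) < zp - x by
          have := hx.2; simp only [Set.mem_Icc] at hx; linarith [hx.2]).ne')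
    · exact (continuousOn_const.sub continuousOn_id).rpow_const
        (fun x hx => Or.inr (by linarith))
  have hii : ∀ k : ℕ, IntervalIntegrable
      (fun z : ℝ => z^k * (zp - z)^(-α) * (zm - z)^(α-1)) MeasureTheory.volume 0 zm := by
    intro k
    apply ContinuousOn.intervalIntegrable
    rw [huIcc]; exact hcont k
  have hcontF : ContinuousOn F (Set.Icc 0 zm) := by
    apply ContinuousOn.mul
    apply ContinuousOn.mul
    · exact (continuous_const.mul (continuous_pow (m+1))).continuousOn
    · exact (continuousOn_const.sub continuousOn_id).rpow_const
        (fun x hx => Or.inl (show (0:ℝ) < zp - x by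
          simp only [Set.mem_Icc] at hx; linarith [hx.2]).ne')
    · exact (continuousOn_const.sub continuousOn_id).rpow_const
        (fun x hx => Or.inr hα0.le)
  have hiiF' : IntervalIntegrable F' MeasureTheory.volume 0 zm := by
    exact (((hii (m+2)).const_mul _).sub ((hii (m+1)).const_mul _)).add ((hii m).const_mul _)
  have hFTC := intervalIntegral.integral_eq_sub_of_hasDeriv_right_of_le hle hcontF
    (fun x hx => (hderiv x hx).hasDerivWithinAt) hiiF'
  have hFzm : F zm = 0 := by
    simp [hF_def, Real.zero_rpow hα0.ne']
  have hF0 : F 0 = 0 := by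
    simp [hF_def]
  rw [hFzm, hF0, sub_zero] at hFTC
  rw [hF'_def] at hFTC
  rw [intervalIntegral.integral_add (((hii (m+2)).const_mul _).sub ((hii (m+1)).const_mul _))
        ((hii m).const_mul _),
      intervalIntegral.integral_sub ((hii (m+2)).const_mul _) ((hii (m+1)).const_mul _),
      intervalIntegral.integral_const_mul, intervalIntegral.integral_const_mul,
      intervalIntegral.integral_const_mul] at hFTC
  simp only [Nat.add_sub_cancel]
  rw [show m + 1 + 1 = m + 2 from rfl, hG (m+2), hG (m+1), hG m]
  push_cast
  linarith [hFTC]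
end

section
/- For any ρ ∈ (0,1), the function Θ(N,T) = T(−1−ρ + sqrt(N²/T² + 4ρ)) + N·log[(1/(2ρ))(−N/T + sqrt(N²/T² + 4ρ))], defined for N, T > 0, satisfies the eikonal-type PDE Θ_T = ρ·e^{Θ_N} + e^{−Θ_N} − (1+ρ). -/
open Real

theorem Theta_eikonal (ρ : ℝ) (hρ : 0 < ρ) (hρ1 : ρ < 1)
    (Θ : ℝ → ℝ → ℝ)
    (hΘ : ∀ N T : ℝ, Θ N T =
      T * (-1 - ρ + Real.sqrt (N^2 / T^2 + 4*ρ))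
        + N * Real.log ((1 / (2*ρ)) * (-(N / T) + Real.sqrt (N^2 / T^2 + 4*ρ)))) :
    ∀ N T : ℝ, 0 < N → 0 < T →
      deriv (fun T' => Θ N T') T
        = ρ * Real.exp (deriv (fun N' => Θ N' T) N)
          + Real.exp (-(deriv (fun N' => Θ N' T) N)) - (1 + ρ) := by
  intro N T hN hT
  set s := Real.sqrt (N^2 / T^2 + 4*ρ) with hsdef
  have hA : 0 < N^2 / T^2 + 4*ρ := by positivity
  have hs2 : s^2 = N^2 / T^2 + 4*ρ := Real.sq_sqrt hA.le
  have hs0 : 0 < s := Real.sqrt_pos.mpr hA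
  have hx2 : (N/T)^2 = N^2 / T^2 := by rw [div_pow]
  have hsx : N / T < s := by nlinarith [div_pos hN hT]
  have hu : 0 < (1 / (2*ρ)) * (-(N / T) + s) := by
    apply mul_pos (by positivity); linarith
  have h2ρ : (1:ℝ) / (2*ρ) ≠ 0 := by positivity
  have hd : -(N/T) + s ≠ 0 := by linarith
  have hden : s * T - N ≠ 0 := by
    have : N < s * T := by
      rw [div_lt_iff₀ hT] at hsx; linarith
    linarith
  -- derivative in T
  have hTder : HasDerivAt (fun T' => Θ N T') (-1 - ρ + s) T := by
    have hpow : HasDerivAt (fun T' : ℝ => T'^2) (2*T) T := by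
      simpa using hasDerivAt_pow 2 T
    have hq : HasDerivAt (fun T' : ℝ => N^2 / T'^2 + 4*ρ)
        ((0 * T^2 - N^2 * (2*T)) / (T^2)^2) T :=
      ((hasDerivAt_const T (N^2)).div hpow (by positivity)).add_const (4*ρ)
    have hsq : HasDerivAt (fun T' : ℝ => Real.sqrt (N^2 / T'^2 + 4*ρ))
        (-(N^2) / (T^3 * s)) T := by
      have := hq.sqrt hA.ne'
      convert this using 1
      rw [← hsdef]
      field_simp
      ring
    have h1 : HasDerivAt (fun T' : ℝ => T' * (-1 - ρ + Real.sqrt (N^2 / T'^2 + 4*ρ)))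
        (1 * (-1 - ρ + s) + T * (-(N^2) / (T^3 * s))) T :=
      (hasDerivAt_id T).mul (hsq.const_add (-1 - ρ))
    have hinner : HasDerivAt (fun T' : ℝ => (1 / (2*ρ)) * (-(N / T') + Real.sqrt (N^2 / T'^2 + 4*ρ)))
        ((1 / (2*ρ)) * (N / T^2 + -(N^2) / (T^3 * s))) T := by
      have hdiv : HasDerivAt (fun T' : ℝ => -(N / T')) (N / T^2) T := by
        have : HasDerivAt (fun T' : ℝ => N / T') ((0 * T - N * 1) / T^2) T :=
          (hasDerivAt_const T N).div (hasDerivAt_id T) hT.ne'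
        refine this.neg.congr_deriv ?_
        field_simp
        ring
      exact (hdiv.add hsq).const_mul _
    have hlog : HasDerivAt (fun T' : ℝ => Real.log ((1 / (2*ρ)) * (-(N / T') + Real.sqrt (N^2 / T'^2 + 4*ρ))))
        ((N / T^2 + -(N^2) / (T^3 * s)) / (-(N / T) + s)) T := by
      have := hinner.log hu.ne'
      rwa [mul_div_mul_left _ _ h2ρ] at this
    have htot := h1.add (hlog.const_mul N)
    have heq : (fun T' => Θ N T') = (fun T' : ℝ =>
        T' * (-1 - ρ + Real.sqrt (N^2 / T'^2 + 4*ρ))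
          + N * Real.log ((1 / (2*ρ)) * (-(N / T') + Real.sqrt (N^2 / T'^2 + 4*ρ)))) := by
      funext T'; rw [hΘ]
    rw [heq]
    refine htot.congr_deriv ?_
    have helper1 : (N / T^2 + -(N^2) / (T^3 * s)) / (-(N / T) + s) = N / (T^2 * s) := by
      rw [div_eq_div_iff hd (by positivity : (T:ℝ)^2 * s ≠ 0)]
      field_simp
      ring
    rw [helper1]
    field_simp
    ring
  -- derivative in N
  have hNder : HasDerivAt (fun N' => Θ N' T) (Real.log ((1 / (2*ρ)) * (-(N / T) + s))) N := by
    have hq : HasDerivAt (fun N' : ℝ => N'^2 / T^2 + 4*ρ) (2*N / T^2) N := by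
      have hpow : HasDerivAt (fun N' : ℝ => N'^2) (2*N) N := by
        simpa using hasDerivAt_pow 2 N
      simpa using (hpow.div_const (T^2)).add_const (4*ρ)
    have hsq : HasDerivAt (fun N' : ℝ => Real.sqrt (N'^2 / T^2 + 4*ρ)) (N / (T^2 * s)) N := by
      have := hq.sqrt hA.ne'
      convert this using 1
      rw [← hsdef]
      field_simp
    have h1 : HasDerivAt (fun N' : ℝ => T * (-1 - ρ + Real.sqrt (N'^2 / T^2 + 4*ρ)))
        (T * (N / (T^2 * s))) N := by
      have := (hsq.const_add (-1 - ρ)).const_mul T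
      simpa using this
    have hinner : HasDerivAt (fun N' : ℝ => (1 / (2*ρ)) * (-(N' / T) + Real.sqrt (N'^2 / T^2 + 4*ρ)))
        ((1 / (2*ρ)) * (-(1 / T) + N / (T^2 * s))) N := by
      have hdiv : HasDerivAt (fun N' : ℝ => -(N' / T)) (-(1 / T)) N := by
        exact ((hasDerivAt_id N).div_const T).neg.congr_deriv (by simp)
      exact (hdiv.add hsq).const_mul _
    have hlog : HasDerivAt (fun N' : ℝ => Real.log ((1 / (2*ρ)) * (-(N' / T) + Real.sqrt (N'^2 / T^2 + 4*ρ))))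
        ((-(1 / T) + N / (T^2 * s)) / (-(N / T) + s)) N := by
      have := hinner.log hu.ne'
      rwa [mul_div_mul_left _ _ h2ρ] at this
    have h2 : HasDerivAt (fun N' : ℝ => N' * Real.log ((1 / (2*ρ)) * (-(N' / T) + Real.sqrt (N'^2 / T^2 + 4*ρ))))
        (1 * Real.log ((1 / (2*ρ)) * (-(N / T) + s))
          + N * ((-(1 / T) + N / (T^2 * s)) / (-(N / T) + s))) N :=
      (hasDerivAt_id N).mul hlog
    have htot := h1.add h2
    have heq : (fun N' => Θ N' T) = (fun N' : ℝ =>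
        T * (-1 - ρ + Real.sqrt (N'^2 / T^2 + 4*ρ))
          + N' * Real.log ((1 / (2*ρ)) * (-(N' / T) + Real.sqrt (N'^2 / T^2 + 4*ρ)))) := by
      funext N'; rw [hΘ]
    rw [heq]
    refine htot.congr_deriv ?_
    have helper2 : (-(1 / T) + N / (T^2 * s)) / (-(N / T) + s) = -(1 / (T * s)) := by
      rw [div_eq_iff hd]
      field_simp
      ring
    have hz : T * (N / (T^2 * s)) + N * ((-(1 / T) + N / (T^2 * s)) / (-(N / T) + s)) = 0 := by
      rw [helper2]
      field_simp
      ring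
    linarith [hz]
  rw [hTder.deriv, hNder.deriv]
  rw [Real.exp_log hu, Real.exp_neg, Real.exp_log hu]
  have h4 : (-(N/T) + s) * ((N/T) + s) = 4*ρ := by linear_combination hs2 - hx2
  have hmul : ((1 / (2*ρ)) * (-(N/T) + s)) * ((N/T + s) / 2) = 1 := by
    have e1 : ((1 / (2*ρ)) * (-(N/T) + s)) * ((N/T + s) / 2)
        = ((-(N/T) + s) * ((N/T) + s)) / (4*ρ) := by ring
    rw [e1, h4]
    field_simp
  have hinv : ((1 / (2*ρ)) * (-(N/T) + s))⁻¹ = (N/T + s) / 2 :=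
    inv_eq_of_mul_eq_one_right hmul
  rw [hinv]
  have hρu : ρ * ((1 / (2*ρ)) * (-(N/T) + s)) = (-(N/T) + s) / 2 := by
    field_simp
  rw [hρu]
  ring
end

section
/- For any a with 0 < a ≤ (4√ρ/π)^{2/3} and ρ ∈ (0,1), the equation 2√ρ · C^{3/2} · a^{−3/2} = sqrt(C(1−C)) + π − arcsin(√C) has a unique solution C ∈ (0,1], with C = 1 exactly when a = (4√ρ/π)^{2/3}. -/
open Real

noncomputable def gFun (C : ℝ) : ℝ :=
  Real.sqrt (C * (1 - C)) + π - Real.arcsin (Real.sqrt C)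

noncomputable def hFun (C : ℝ) : ℝ := gFun C * C ^ (-(3:ℝ)/2)

lemma gFun_lb (C : ℝ) : π / 2 ≤ gFun C := by
  have h1 := Real.arcsin_le_pi_div_two (Real.sqrt C)
  have h2 := Real.sqrt_nonneg (C * (1 - C))
  unfold gFun; linarith

lemma Gθ_strictAnti :
    StrictAntiOn (fun θ : ℝ => Real.sin θ * Real.cos θ + π - θ) (Set.Icc 0 (π/2)) := by
  have hπ := Real.pi_pos
  apply strictAntiOn_of_deriv_neg (convex_Icc _ _)
  · fun_prop
  · intro x hx
    rw [interior_Icc, Set.mem_Ioo] at hx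
    have hd : HasDerivAt (fun θ : ℝ => Real.sin θ * Real.cos θ + π - θ)
        ((Real.cos x * Real.cos x + Real.sin x * (-Real.sin x)) - 1) x :=
      (((Real.hasDerivAt_sin x).mul (Real.hasDerivAt_cos x)).add_const π).sub (hasDerivAt_id x)
    rw [hd.deriv]
    have hs : 0 < Real.sin x := Real.sin_pos_of_pos_of_lt_pi hx.1 (by linarith [hx.2])
    nlinarith [Real.sin_sq_add_cos_sq x]

lemma gFun_eq {C : ℝ} (h0 : 0 ≤ C) (h1 : C ≤ 1) :
    gFun C = Real.sin (Real.arcsin (Real.sqrt C)) * Real.cos (Real.arcsin (Real.sqrt C))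
      + π - Real.arcsin (Real.sqrt C) := by
  have hs1 : Real.sqrt C ≤ 1 := by
    rw [show (1:ℝ) = Real.sqrt 1 by simp]
    exact Real.sqrt_le_sqrt h1
  rw [Real.sin_arcsin (by linarith [Real.sqrt_nonneg C]) hs1, Real.cos_arcsin, Real.sq_sqrt h0,
    ← Real.sqrt_mul h0]
  rfl

lemma arcsin_sqrt_mem {C : ℝ} (h0 : 0 ≤ C) : Real.arcsin (Real.sqrt C) ∈ Set.Icc 0 (π/2) :=
  ⟨Real.arcsin_nonneg.2 (Real.sqrt_nonneg C), Real.arcsin_le_pi_div_two _⟩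

lemma gFun_anti : StrictAntiOn gFun (Set.Icc (0:ℝ) 1) := by
  intro x hx y hy hxy
  rw [gFun_eq hx.1 hx.2, gFun_eq hy.1 hy.2]
  apply Gθ_strictAnti (arcsin_sqrt_mem hx.1) (arcsin_sqrt_mem hy.1)
  have hsq : Real.sqrt x < Real.sqrt y := Real.sqrt_lt_sqrt hx.1 hxy
  have hmx : Real.sqrt x ∈ Set.Icc (-1:ℝ) 1 := by
    constructor
    · linarith [Real.sqrt_nonneg x]
    · rw [show (1:ℝ) = Real.sqrt 1 by simp]; exact Real.sqrt_le_sqrt hx.2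
  have hmy : Real.sqrt y ∈ Set.Icc (-1:ℝ) 1 := by
    constructor
    · linarith [Real.sqrt_nonneg y]
    · rw [show (1:ℝ) = Real.sqrt 1 by simp]; exact Real.sqrt_le_sqrt hy.2
  exact Real.strictMonoOn_arcsin hmx hmy hsq

lemma hFun_anti : StrictAntiOn hFun (Set.Ioc (0:ℝ) 1) := by
  have hπ := Real.pi_pos
  intro x hx y hy hxy
  have hg : gFun y < gFun x :=
    gFun_anti ⟨hx.1.le, hx.2⟩ ⟨(hx.1.trans hxy).le, hy.2⟩ hxy
  have hgy : 0 < gFun y := lt_of_lt_of_le (by linarith) (gFun_lb y)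
  have hr : y ^ (-(3:ℝ)/2) < x ^ (-(3:ℝ)/2) :=
    Real.rpow_lt_rpow_of_neg hx.1 hxy (by norm_num)
  have hry : 0 < y ^ (-(3:ℝ)/2) := Real.rpow_pos_of_pos (hx.1.trans hxy) _
  exact mul_lt_mul'' hg hr hgy.le hry.le

lemma hFun_one : hFun 1 = π/2 := by
  unfold hFun gFun
  rw [Real.one_rpow, Real.sqrt_one, Real.arcsin_one]
  norm_num
  ring

lemma hFun_cont : ContinuousOn hFun (Set.Ioi (0:ℝ)) := by
  apply ContinuousOn.mul
  · apply Continuous.continuousOn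
    unfold gFun
    exact ((Real.continuous_sqrt.comp (by fun_prop)).add continuous_const).sub
      (Real.continuous_arcsin.comp Real.continuous_sqrt)
  · intro x hx
    exact (Real.continuousAt_rpow_const x _ (Or.inl (ne_of_gt hx))).continuousWithinAt

lemma exists_sol {k : ℝ} (hk : π/2 ≤ k) : ∃ C ∈ Set.Ioc (0:ℝ) 1, hFun C = k := by
  have hπ := Real.pi_pos
  have hk0 : 0 < k := lt_of_lt_of_le (by linarith) hk
  set ε : ℝ := (π/(2*k)) ^ ((2:ℝ)/3) with hεdef
  have hb : (0:ℝ) < π/(2*k) := by positivity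
  have hε0 : 0 < ε := Real.rpow_pos_of_pos hb _
  have hε1 : ε ≤ 1 :=
    Real.rpow_le_one hb.le (by rw [div_le_one (by positivity)]; linarith) (by norm_num)
  have hεh : k ≤ hFun ε := by
    have h1 : ε ^ (-(3:ℝ)/2) = 2*k/π := by
      rw [hεdef, ← Real.rpow_mul hb.le]
      norm_num
      rw [Real.rpow_neg_one, inv_div]
    unfold hFun
    rw [h1]
    calc k = (π/2) * (2*k/π) := by field_simp
    _ ≤ gFun ε * (2*k/π) := mul_le_mul_of_nonneg_right (gFun_lb ε) (by positivity)
  have hcont : ContinuousOn hFun (Set.Icc ε 1) :=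
    hFun_cont.mono (fun x hx => lt_of_lt_of_le hε0 hx.1)
  have hmem : k ∈ Set.Icc (hFun 1) (hFun ε) := by rw [hFun_one]; exact ⟨hk, hεh⟩
  obtain ⟨C, hC, hCk⟩ := intermediate_value_Icc' hε1 hcont hmem
  exact ⟨C, ⟨lt_of_lt_of_le hε0 hC.1, hC.2⟩, hCk⟩

lemma eq_iff' {k C : ℝ} (hC : 0 < C) :
    k * C ^ ((3:ℝ)/2) = gFun C ↔ hFun C = k := by
  have hp : C ^ ((3:ℝ)/2) * C ^ (-(3:ℝ)/2) = 1 := by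
    rw [← Real.rpow_add hC]; norm_num
  unfold hFun
  constructor
  · intro h
    calc gFun C * C ^ (-(3:ℝ)/2) = k * C ^ ((3:ℝ)/2) * C ^ (-(3:ℝ)/2) := by rw [h]
    _ = k * (C ^ ((3:ℝ)/2) * C ^ (-(3:ℝ)/2)) := by ring
    _ = k := by rw [hp]; ring
  · intro h
    calc k * C ^ ((3:ℝ)/2) = gFun C * C ^ (-(3:ℝ)/2) * C ^ ((3:ℝ)/2) := by rw [h]
    _ = gFun C * (C ^ ((3:ℝ)/2) * C ^ (-(3:ℝ)/2)) := by ring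
    _ = gFun C := by rw [hp]; ring
theorem C_equation_unique_solution (ρ : ℝ) (hρ : 0 < ρ) (hρ1 : ρ < 1) :
    ∃ F : ℝ → ℝ,
      ∀ a : ℝ, 0 < a → a ≤ (4 * Real.sqrt ρ / π) ^ ((2:ℝ)/3) →
        F a ∈ Set.Ioc (0:ℝ) 1 ∧
        2 * Real.sqrt ρ * (F a) ^ ((3:ℝ)/2) * a ^ (-(3:ℝ)/2)
          = Real.sqrt (F a * (1 - F a)) + π - Real.arcsin (Real.sqrt (F a)) ∧
        (∀ C : ℝ, C ∈ Set.Ioc (0:ℝ) 1 →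
          2 * Real.sqrt ρ * C ^ ((3:ℝ)/2) * a ^ (-(3:ℝ)/2)
            = Real.sqrt (C * (1 - C)) + π - Real.arcsin (Real.sqrt C) → C = F a) ∧
        (F a = 1 ↔ a = (4 * Real.sqrt ρ / π) ^ ((2:ℝ)/3)) := by
  classical
  have hπ := Real.pi_pos
  have hsρ : 0 < Real.sqrt ρ := Real.sqrt_pos.2 hρ
  refine ⟨fun a => if hc : ∃ C ∈ Set.Ioc (0:ℝ) 1, hFun C = 2 * Real.sqrt ρ * a ^ (-(3:ℝ)/2)
      then hc.choose else 1, ?_⟩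
  intro a ha hle
  set k := 2 * Real.sqrt ρ * a ^ (-(3:ℝ)/2) with hkdef
  have hA : 0 < 4 * Real.sqrt ρ / π := by positivity
  have h32pos : 0 < a ^ ((3:ℝ)/2) := Real.rpow_pos_of_pos ha _
  have h32 : a ^ ((3:ℝ)/2) ≤ 4 * Real.sqrt ρ / π := by
    calc a ^ ((3:ℝ)/2) ≤ ((4*Real.sqrt ρ/π) ^ ((2:ℝ)/3)) ^ ((3:ℝ)/2) :=
      Real.rpow_le_rpow ha.le hle (by norm_num)
    _ = 4*Real.sqrt ρ/π := by
      rw [← Real.rpow_mul hA.le]; norm_num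
  have hainv : a ^ (-(3:ℝ)/2) = (a ^ ((3:ℝ)/2))⁻¹ := by
    rw [← Real.rpow_neg ha.le]; norm_num
  have hk : π/2 ≤ k := by
    rw [hkdef, hainv, ← div_eq_mul_inv, le_div_iff₀ h32pos]
    rw [le_div_iff₀ hπ] at h32
    nlinarith [h32]
  have hc : ∃ C ∈ Set.Ioc (0:ℝ) 1, hFun C = k := exists_sol hk
  simp only [← hkdef, dif_pos hc]
  obtain ⟨hCmem, hCsol⟩ := hc.choose_spec
  set C₀ := hc.choose with hC₀def
  have he : k * C₀ ^ ((3:ℝ)/2) = gFun C₀ := (eq_iff' hCmem.1).2 hCsol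
  refine ⟨hCmem, ?_, ?_, ?_⟩
  · calc 2 * Real.sqrt ρ * C₀ ^ ((3:ℝ)/2) * a ^ (-(3:ℝ)/2)
        = k * C₀ ^ ((3:ℝ)/2) := by rw [hkdef]; ring
    _ = gFun C₀ := he
    _ = Real.sqrt (C₀ * (1 - C₀)) + π - Real.arcsin (Real.sqrt C₀) := rfl
  · intro C hC hsolC
    have h' : k * C ^ ((3:ℝ)/2) = gFun C := by
      unfold gFun; rw [← hsolC, hkdef]; ring
    have hCk : hFun C = k := (eq_iff' hC.1).1 h'
    exact hFun_anti.injOn hC hCmem (hCk.trans hCsol.symm)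
  · constructor
    · intro h1
      have hk2 : k = π/2 := by rw [← hCsol, h1, hFun_one]
      rw [hkdef, hainv] at hk2
      have ha32 : a ^ ((3:ℝ)/2) = 4 * Real.sqrt ρ / π := by
        field_simp at hk2 ⊢
        linarith
      rw [← ha32, ← Real.rpow_mul ha.le]
      norm_num
    · intro h1
      have ha32 : a ^ ((3:ℝ)/2) = 4 * Real.sqrt ρ / π := by
        rw [h1, ← Real.rpow_mul hA.le]; norm_num
      have hk2 : k = π/2 := by
        rw [hkdef, hainv, ha32, inv_div]
        field_simp
        ring
      exact hFun_anti.injOn hCmem ⟨one_pos, le_refl 1⟩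
        (hCsol.trans (hk2.trans hFun_one.symm))
end

section
/- Define P_n for n ≥ 0 by P_n = (1/(2πi)) ∮_{C*} z^{−(n+1)}(1−z)^{−1} e^{1/(1−z)} dz (equivalently P_n = ∑_{l≥0} binom(n+l, l) / l!). Then P_n satisfies the three-term recurrence P_{n+1} − 2P_n + (n/(n+1)) P_{n−1} = 0 for all n ≥ 1. -/
open Real Complex

lemma circleIntegral_add {f g : ℂ → ℂ} {c : ℂ} {R : ℝ}
    (hf : CircleIntegrable f c R) (hg : CircleIntegrable g c R) :
    (∮ z in C(c, R), (f z + g z)) = (∮ z in C(c, R), f z) + ∮ z in C(c, R), g z := by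
  simp only [circleIntegral, smul_add, intervalIntegral.integral_add hf.out hg.out]

theorem Pn_recurrence (r : ℝ) (hr0 : 0 < r) (hr1 : r < 1)
    (P : ℕ → ℂ)
    (hP : ∀ n : ℕ, P n = (1 / (2 * Real.pi * Complex.I)) *
      (∮ z in C(0, r), z ^ (-(n : ℤ) - 1) * (1 - z)⁻¹ * Complex.exp (1 / (1 - z)))) :
    ∀ n : ℕ, 1 ≤ n →
      P (n + 1) - 2 * P n + ((n : ℂ) / ((n : ℂ) + 1)) * P (n - 1) = 0 := by
  intro n hn
  -- basic facts about points on the sphere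
  have hsph : ∀ z ∈ Metric.sphere (0:ℂ) r, z ≠ 0 ∧ (1 - z) ≠ 0 := by
    intro z hz
    rw [Metric.mem_sphere, dist_zero_right] at hz
    constructor
    · intro h; rw [h] at hz; simp at hz; linarith
    · intro h
      have h1 : z = 1 := by linear_combination -h
      rw [h1] at hz; norm_num at hz; linarith
  -- integrand family
  set g : ℤ → ℂ → ℂ := fun m z => z ^ m * (1 - z)⁻¹ * Complex.exp (1 / (1 - z)) with hg
  have hcont : ∀ m : ℤ, ContinuousOn (g m) (Metric.sphere (0:ℂ) r) := by
    intro m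
    apply ContinuousOn.mul
    apply ContinuousOn.mul
    · exact (continuousOn_id.zpow₀ m (fun z hz => Or.inl (hsph z hz).1))
    · exact ContinuousOn.inv₀ (by fun_prop) (fun z hz => (hsph z hz).2)
    · exact Complex.continuousOn_exp.comp
        (ContinuousOn.div continuousOn_const (by fun_prop) (fun z hz => (hsph z hz).2))
        (Set.mapsTo_univ _ _)
  have hci : ∀ m : ℤ, CircleIntegrable (g m) 0 r :=
    fun m => (hcont m).circleIntegrable hr0.le
  -- the total derivative
  have hderiv : ∀ z ∈ Metric.sphere (0:ℂ) r,
      HasDerivAt (fun w => w ^ (-(n:ℤ) - 1) * ((1 - w) * Complex.exp (1/(1 - w))))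
        ((-(n:ℂ) - 1) * (g (-(n:ℤ)-2) z - 2 * g (-(n:ℤ)-1) z + g (-(n:ℤ)) z)
          + g (-(n:ℤ)) z) z := by
    intro z hz
    obtain ⟨hz0, hz1⟩ := hsph z hz
    have h1 : HasDerivAt (fun w : ℂ => w ^ (-(n:ℤ) - 1))
        (((-(n:ℤ) - 1 : ℤ) : ℂ) * z ^ (-(n:ℤ) - 1 - 1)) z :=
      hasDerivAt_zpow _ _ (Or.inl hz0)
    have h2 : HasDerivAt (fun w : ℂ => 1 - w) (-1) z := (hasDerivAt_id z).const_sub 1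
    have h3 : HasDerivAt (fun w : ℂ => (1 - w)⁻¹) (-(-1) / (1 - z) ^ 2) z := h2.inv hz1
    have h4 : HasDerivAt (fun w : ℂ => Complex.exp ((1 - w)⁻¹))
        (Complex.exp ((1 - z)⁻¹) * (-(-1) / (1 - z) ^ 2)) z := h3.cexp
    have h5 := h2.mul h4
    have h6 := h1.mul h5
    have h7 : (fun w : ℂ => w ^ (-(n:ℤ) - 1) * ((1 - w) * Complex.exp (1/(1 - w))))
        = fun w : ℂ => w ^ (-(n:ℤ) - 1) * ((1 - w) * Complex.exp ((1 - w)⁻¹)) := by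
      funext w; rw [one_div]
    rw [h7]
    refine h6.congr_deriv (Eq.symm ?_)
    have hA : z ^ (-(n:ℤ) - 1) = z ^ (-(n:ℤ) - 2) * z := by
      rw [← zpow_add_one₀ hz0]; congr 1; ring
    have hB : z ^ (-(n:ℤ)) = z ^ (-(n:ℤ) - 2) * z * z := by
      rw [← zpow_add_one₀ hz0, ← zpow_add_one₀ hz0]; congr 1; ring
    have hC : z ^ (-(n:ℤ) - 1 - 1) = z ^ (-(n:ℤ) - 2) := by congr 1; ring
    simp only [hg, hA, hB, hC, one_div, Pi.mul_apply]
    push_cast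
    field_simp
    ring
  -- the integral of the derivative vanishes
  have hzero : (∮ z in C(0, r),
      ((-(n:ℂ) - 1) * (g (-(n:ℤ)-2) z - 2 * g (-(n:ℤ)-1) z + g (-(n:ℤ)) z)
        + g (-(n:ℤ)) z)) = 0 :=
    circleIntegral.integral_eq_zero_of_hasDerivWithinAt hr0.le
      (fun z hz => (hderiv z hz).hasDerivWithinAt)
  -- integrability of the pieces
  have hciC : ∀ (a : ℂ) (f : ℂ → ℂ), CircleIntegrable f 0 r →
      CircleIntegrable (fun z => a * f z) 0 r :=
    fun a f hf => IntervalIntegrable.const_mul hf a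
  have hciS : ∀ (f h : ℂ → ℂ), CircleIntegrable f 0 r → CircleIntegrable h 0 r →
      CircleIntegrable (fun z => f z - h z) 0 r :=
    fun f h hf hh => IntervalIntegrable.sub hf hh
  have hciA : ∀ (f h : ℂ → ℂ), CircleIntegrable f 0 r → CircleIntegrable h 0 r →
      CircleIntegrable (fun z => f z + h z) 0 r :=
    fun f h hf hh => IntervalIntegrable.add hf hh
  -- split the integral
  have hcomb : CircleIntegrable (fun z => g (-(n:ℤ)-2) z - 2 * g (-(n:ℤ)-1) z
      + g (-(n:ℤ)) z) 0 r :=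
    hciA _ _ (hciS _ _ (hci _) (hciC 2 _ (hci _))) (hci _)
  have hsplit : (∮ z in C(0, r),
      ((-(n:ℂ) - 1) * (g (-(n:ℤ)-2) z - 2 * g (-(n:ℤ)-1) z + g (-(n:ℤ)) z)
        + g (-(n:ℤ)) z))
      = (-(n:ℂ) - 1) * ((∮ z in C(0, r), g (-(n:ℤ)-2) z)
          - 2 * (∮ z in C(0, r), g (-(n:ℤ)-1) z) + (∮ z in C(0, r), g (-(n:ℤ)) z))
        + (∮ z in C(0, r), g (-(n:ℤ)) z) := by
    rw [circleIntegral_add (hciC _ _ hcomb) (hci _)]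
    congr 1
    rw [show (fun z => (-(n:ℂ) - 1) * (g (-(n:ℤ)-2) z - 2 * g (-(n:ℤ)-1) z
        + g (-(n:ℤ)) z)) = fun z => (-(n:ℂ) - 1) • (g (-(n:ℤ)-2) z - 2 * g (-(n:ℤ)-1) z
        + g (-(n:ℤ)) z) from rfl, circleIntegral.integral_smul]
    rw [smul_eq_mul]
    congr 1
    rw [circleIntegral_add (hciS _ _ (hci _) (hciC 2 _ (hci _))) (hci _)]
    congr 1
    rw [circleIntegral.integral_sub (hci _) (hciC 2 _ (hci _))]
    congr 1
    rw [show (fun z => (2:ℂ) * g (-(n:ℤ)-1) z) = fun z => (2:ℂ) • g (-(n:ℤ)-1) z from rfl,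
      circleIntegral.integral_smul, smul_eq_mul]
  rw [hsplit] at hzero
  simp only [hg] at hzero
  -- rewrite the hypotheses hP in matching form
  have hPn1 := hP (n+1)
  have hPn := hP n
  have hPm := hP (n-1)
  have hc1 : (-((n+1 : ℕ) : ℤ) - 1) = -(n:ℤ) - 2 := by push_cast; ring
  have hc2 : (-((n-1 : ℕ) : ℤ) - 1) = -(n:ℤ) := by omega
  simp only [hc1] at hPn1
  simp only [hc2] at hPm
  set A := ∮ z in C(0,r), z ^ (-(n:ℤ) - 2) * (1 - z)⁻¹ * Complex.exp (1/(1 - z)) with hA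
  set B := ∮ z in C(0,r), z ^ (-(n:ℤ) - 1) * (1 - z)⁻¹ * Complex.exp (1/(1 - z)) with hB
  set C := ∮ z in C(0,r), z ^ (-(n:ℤ)) * (1 - z)⁻¹ * Complex.exp (1/(1 - z)) with hC
  have hne : ((n:ℂ) + 1) ≠ 0 := Nat.cast_add_one_ne_zero n
  have h1 : ((n:ℂ)+1) * (A - 2*B + C) = C := by linear_combination -hzero
  have h2 : A - 2*B + C = C / ((n:ℂ)+1) := (eq_div_iff hne).mpr (by linear_combination h1)
  have h3 : A - 2*B + ((n:ℂ)/((n:ℂ)+1)) * C = 0 := by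
    have hx : ((n:ℂ)/((n:ℂ)+1)) * C = C - C/((n:ℂ)+1) := by field_simp; ring
    rw [hx]; linear_combination h2
  rw [hPn1, hPn, hPm]
  linear_combination (1 / (2*(π:ℂ)*Complex.I)) * h3
end

section
/- For ρ ∈ (0,1), the function H(Δ) = sqrt((1−ρ)/(1+ρ)) · (1/√(2π)) · ∫₀^∞ y^{ρ/(1−ρ)} exp(−((1−ρ)/(2(1+ρ)))(y−Δ)²) dy satisfies the parabolic cylinder equation (1+ρ)H″(Δ) + (1−ρ)Δ H′(Δ) − ρ H(Δ) = 0 for all real Δ. -/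
open Real MeasureTheory Set Filter Metric Topology

namespace HPC

lemma contOn (c β Δ : ℝ) :
    ContinuousOn (fun y : ℝ => y ^ β * Real.exp (-c * (y - Δ)^2)) (Ioi 0) := by
  apply ContinuousOn.mul
  · intro y hy
    exact (Real.continuousAt_rpow_const y β (Or.inl (ne_of_gt hy))).continuousWithinAt
  · exact (Real.continuous_exp.comp (by continuity)).continuousOn

lemma exp_bound {c : ℝ} (hc : 0 < c) {Δ M : ℝ} (hΔ : |Δ| ≤ M) (y : ℝ) :
    Real.exp (-c * (y - Δ)^2) ≤ Real.exp (c * M^2) * Real.exp (-(c/2) * y^2) := by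
  rw [← Real.exp_add, Real.exp_le_exp]
  have h1 := abs_le.1 hΔ
  have h2 : Δ^2 ≤ M^2 := sq_le_sq' (by linarith) h1.2
  nlinarith [sq_nonneg (y - 2*Δ)]

lemma integ {c : ℝ} (hc : 0 < c) {β : ℝ} (hβ : -1 < β) (Δ : ℝ) :
    IntegrableOn (fun y : ℝ => y ^ β * Real.exp (-c * (y - Δ)^2)) (Ioi 0) := by
  have base : IntegrableOn
      (fun y : ℝ => Real.exp (c * Δ^2) * (y ^ β * Real.exp (-(c/2) * y^2))) (Ioi 0) :=
    (integrableOn_rpow_mul_exp_neg_mul_sq (half_pos hc) hβ).const_mul _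
  refine base.mono' ((contOn c β Δ).aestronglyMeasurable measurableSet_Ioi) ?_
  rw [ae_restrict_iff' measurableSet_Ioi]
  filter_upwards with y hy
  rw [norm_mul, Real.norm_eq_abs, Real.norm_eq_abs,
    abs_of_nonneg (Real.rpow_nonneg hy.le β), abs_of_nonneg (Real.exp_pos _).le]
  calc y ^ β * Real.exp (-c * (y - Δ)^2)
      ≤ y ^ β * (Real.exp (c * Δ^2) * Real.exp (-(c/2) * y^2)) := by
        refine mul_le_mul_of_nonneg_left ?_ (Real.rpow_nonneg hy.le β)
        simpa [sq_abs] using exp_bound hc (le_refl |Δ|) y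
    _ = Real.exp (c * Δ^2) * (y ^ β * Real.exp (-(c/2) * y^2)) := by ring

lemma integ_lin {c : ℝ} (hc : 0 < c) {β : ℝ} (hβ : -1 < β) (Δ d : ℝ) :
    IntegrableOn (fun y : ℝ => (y - d) * (y ^ β * Real.exp (-c * (y - Δ)^2))) (Ioi 0) := by
  have h1 := (integ hc (by linarith : (-1:ℝ) < β + 1) Δ).sub ((integ hc hβ Δ).const_mul d)
  refine MeasureTheory.IntegrableOn.congr_fun h1 ?_ measurableSet_Ioi
  intro y hy
  have : y ^ (β + 1) = y ^ β * y := Real.rpow_add_one (ne_of_gt hy) β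
  simp only [Pi.sub_apply, this]; ring

lemma integ_quad {c : ℝ} (hc : 0 < c) {β : ℝ} (hβ : -1 < β) (Δ d : ℝ) :
    IntegrableOn (fun y : ℝ => (y - d)^2 * (y ^ β * Real.exp (-c * (y - Δ)^2))) (Ioi 0) := by
  have h1 := ((integ hc (by linarith : (-1:ℝ) < β + 1 + 1) Δ).sub
      (((integ hc (by linarith : (-1:ℝ) < β + 1) Δ)).const_mul (2*d))).add
      ((integ hc hβ Δ).const_mul (d^2))
  refine MeasureTheory.IntegrableOn.congr_fun h1 ?_ measurableSet_Ioi
  intro y hy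
  have e1 : y ^ (β + 1) = y ^ β * y := Real.rpow_add_one (ne_of_gt hy) β
  have e2 : y ^ (β + 1 + 1) = y ^ (β + 1) * y := Real.rpow_add_one (ne_of_gt hy) (β + 1)
  simp only [Pi.add_apply, Pi.sub_apply, e2, e1]; ring

lemma hasDerivAt_exp_part (c y x : ℝ) :
    HasDerivAt (fun t : ℝ => Real.exp (-c * (y - t)^2))
      (2*c*(y - x) * Real.exp (-c * (y - x)^2)) x := by
  have h1 : HasDerivAt (fun t : ℝ => -c * (y - t)^2) (2*c*(y - x)) x := by
    have := (((hasDerivAt_id x).const_sub y).pow 2).const_mul (-c)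
    refine this.congr_deriv ?_
    simp only [id]
    ring
  simpa [mul_comm] using h1.exp

lemma app1 {c : ℝ} (hc : 0 < c) {α : ℝ} (hα : 0 < α) (Δ₀ : ℝ) :
    IntegrableOn (fun y : ℝ => 2*c*(y - Δ₀) * (y ^ α * Real.exp (-c * (y - Δ₀)^2))) (Ioi 0) ∧
    HasDerivAt (fun Δ => ∫ y in Ioi (0:ℝ), y ^ α * Real.exp (-c * (y - Δ)^2))
      (∫ y in Ioi (0:ℝ), 2*c*(y - Δ₀) * (y ^ α * Real.exp (-c * (y - Δ₀)^2))) Δ₀ := by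
  set M : ℝ := |Δ₀| + 1 with hM
  have hβ : (-1:ℝ) < α := by linarith
  have hMpos : 0 < M := by positivity
  have hbound_int : IntegrableOn
      (fun y : ℝ => 2*c*Real.exp (c*M^2) * ((y + M) * (y ^ α * Real.exp (-(c/2) * y^2)))) (Ioi 0) := by
    have h1 := (integ_lin (half_pos hc) hβ 0 (-M)).const_mul (2*c*Real.exp (c*M^2))
    refine MeasureTheory.IntegrableOn.congr_fun h1 ?_ measurableSet_Ioi
    intro y _
    simp only [sub_zero, sub_neg_eq_add]
  have key := hasDerivAt_integral_of_dominated_loc_of_deriv_le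
    (F := fun x (y : ℝ) => y ^ α * Real.exp (-c * (y - x)^2))
    (F' := fun x (y : ℝ) => 2*c*(y - x) * (y ^ α * Real.exp (-c * (y - x)^2)))
    (bound := fun y : ℝ => 2*c*Real.exp (c*M^2) * ((y + M) * (y ^ α * Real.exp (-(c/2) * y^2))))
    (μ := volume.restrict (Ioi 0)) (x₀ := Δ₀) (ball_mem_nhds Δ₀ one_pos)
    (Eventually.of_forall fun x => (contOn c α x).aestronglyMeasurable measurableSet_Ioi)
    (integ hc hβ Δ₀)
    (((by fun_prop : Continuous fun y : ℝ => 2*c*(y - Δ₀)).continuousOn.mul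
      (contOn c α Δ₀)).aestronglyMeasurable measurableSet_Ioi)
    ?_ hbound_int ?_
  · exact key
  · rw [ae_restrict_iff' measurableSet_Ioi]
    filter_upwards with y hy
    intro x hx
    have hxM : |x| ≤ M := by
      have := mem_ball_iff_norm.1 hx
      rw [Real.norm_eq_abs] at this
      calc |x| ≤ |x - Δ₀| + |Δ₀| := by
            simpa using abs_add_le (x - Δ₀) Δ₀
        _ ≤ M := by rw [hM]; linarith
    have h1 : |y - x| ≤ y + M := by
      calc |y - x| ≤ |y| + |x| := abs_sub y x
        _ ≤ y + M := by rw [abs_of_pos hy]; linarith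
    have h2 := exp_bound hc hxM y
    have hnorm : ‖2*c*(y - x) * (y ^ α * Real.exp (-c * (y - x)^2))‖
        = 2*c*|y - x| * (y ^ α * Real.exp (-c * (y - x)^2)) := by
      simp [Real.norm_eq_abs, abs_mul, abs_of_nonneg hc.le,
        abs_of_nonneg (Real.rpow_nonneg hy.le α), abs_of_nonneg (Real.exp_pos _).le]
    rw [hnorm]
    calc 2*c*|y - x| * (y ^ α * Real.exp (-c * (y - x)^2))
        ≤ 2*c*(y + M) * (y ^ α * (Real.exp (c*M^2) * Real.exp (-(c/2) * y^2))) := by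
          gcongr
          all_goals
            first
              | exact mul_nonneg (Real.rpow_nonneg hy.le α) (Real.exp_pos _).le
              | exact Real.rpow_nonneg hy.le α
              | nlinarith [mem_Ioi.mp hy, hMpos, hc]
              | positivity
      _ = 2*c*Real.exp (c*M^2) * ((y + M) * (y ^ α * Real.exp (-(c/2) * y^2))) := by ring
  · filter_upwards with y
    intro x _
    have := (hasDerivAt_exp_part c y x).const_mul (y ^ α)
    exact this.congr_deriv (by ring)

lemma app2 {c : ℝ} (hc : 0 < c) {α : ℝ} (hα : 0 < α) (Δ₀ : ℝ) :
    IntegrableOn (fun y : ℝ => (4*c^2*(y - Δ₀)^2 - 2*c) * (y ^ α * Real.exp (-c * (y - Δ₀)^2))) (Ioi 0) ∧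
    HasDerivAt (fun Δ => ∫ y in Ioi (0:ℝ), 2*c*(y - Δ) * (y ^ α * Real.exp (-c * (y - Δ)^2)))
      (∫ y in Ioi (0:ℝ), (4*c^2*(y - Δ₀)^2 - 2*c) * (y ^ α * Real.exp (-c * (y - Δ₀)^2))) Δ₀ := by
  set M : ℝ := |Δ₀| + 1 with hM
  have hβ : (-1:ℝ) < α := by linarith
  have hMpos : 0 < M := by positivity
  have hbound_int : IntegrableOn
      (fun y : ℝ => Real.exp (c*M^2) * (4*c^2*((y + M)^2 * (y ^ α * Real.exp (-(c/2) * y^2)))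
        + 2*c*(y ^ α * Real.exp (-(c/2) * y^2)))) (Ioi 0) := by
    have h1 := (((integ_quad (half_pos hc) hβ 0 (-M)).const_mul (4*c^2)).add
      ((integ (half_pos hc) hβ 0).const_mul (2*c))).const_mul (Real.exp (c*M^2))
    refine MeasureTheory.IntegrableOn.congr_fun h1 ?_ measurableSet_Ioi
    intro y _
    simp only [Pi.add_apply, sub_zero, sub_neg_eq_add]
  have key := hasDerivAt_integral_of_dominated_loc_of_deriv_le
    (F := fun x (y : ℝ) => 2*c*(y - x) * (y ^ α * Real.exp (-c * (y - x)^2)))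
    (F' := fun x (y : ℝ) => (4*c^2*(y - x)^2 - 2*c) * (y ^ α * Real.exp (-c * (y - x)^2)))
    (bound := fun y : ℝ => Real.exp (c*M^2) * (4*c^2*((y + M)^2 * (y ^ α * Real.exp (-(c/2) * y^2)))
        + 2*c*(y ^ α * Real.exp (-(c/2) * y^2))))
    (μ := volume.restrict (Ioi 0)) (x₀ := Δ₀) (ball_mem_nhds Δ₀ one_pos)
    (Eventually.of_forall fun x =>
      ((by fun_prop : Continuous fun y : ℝ => 2*c*(y - x)).continuousOn.mul
        (contOn c α x)).aestronglyMeasurable measurableSet_Ioi)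
    (app1 hc hα Δ₀).1
    (((by fun_prop : Continuous fun y : ℝ => 4*c^2*(y - Δ₀)^2 - 2*c).continuousOn.mul
      (contOn c α Δ₀)).aestronglyMeasurable measurableSet_Ioi)
    ?_ hbound_int ?_
  · exact key
  · rw [ae_restrict_iff' measurableSet_Ioi]
    filter_upwards with y hy
    intro x hx
    have hxM : |x| ≤ M := by
      have := mem_ball_iff_norm.1 hx
      rw [Real.norm_eq_abs] at this
      calc |x| ≤ |x - Δ₀| + |Δ₀| := by
            simpa using abs_add_le (x - Δ₀) Δ₀
        _ ≤ M := by rw [hM]; linarith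
    have h1 : |y - x| ≤ y + M := by
      calc |y - x| ≤ |y| + |x| := abs_sub y x
        _ ≤ y + M := by rw [abs_of_pos hy]; linarith
    have hsq : (y - x)^2 ≤ (y + M)^2 := by
      have := abs_nonneg (y - x)
      nlinarith [sq_abs (y - x)]
    have h2 := exp_bound hc hxM y
    have habs : |4*c^2*(y - x)^2 - 2*c| ≤ 4*c^2*(y + M)^2 + 2*c := by
      rw [abs_sub_comm]
      calc |2*c - 4*c^2*(y - x)^2| ≤ |2*c| + |4*c^2*(y - x)^2| := abs_sub _ _
        _ ≤ 4*c^2*(y + M)^2 + 2*c := by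
            rw [abs_of_nonneg (by positivity : (0:ℝ) ≤ 2*c),
              abs_of_nonneg (by positivity : (0:ℝ) ≤ 4*c^2*(y - x)^2)]
            nlinarith
    have hnn : (0:ℝ) ≤ y ^ α * Real.exp (-c * (y - x)^2) :=
      mul_nonneg (Real.rpow_nonneg hy.le α) (Real.exp_pos _).le
    calc ‖(4*c^2*(y - x)^2 - 2*c) * (y ^ α * Real.exp (-c * (y - x)^2))‖
        = |4*c^2*(y - x)^2 - 2*c| * (y ^ α * Real.exp (-c * (y - x)^2)) := by
          rw [Real.norm_eq_abs, abs_mul, abs_of_nonneg hnn]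
      _ ≤ (4*c^2*(y + M)^2 + 2*c) * (y ^ α * (Real.exp (c*M^2) * Real.exp (-(c/2) * y^2))) := by
          gcongr
          all_goals
            first
              | exact mul_nonneg (Real.rpow_nonneg hy.le α) (Real.exp_pos _).le
              | exact Real.rpow_nonneg hy.le α
              | nlinarith [mem_Ioi.mp hy, hMpos, hc]
              | positivity
      _ = Real.exp (c*M^2) * (4*c^2*((y + M)^2 * (y ^ α * Real.exp (-(c/2) * y^2)))
            + 2*c*(y ^ α * Real.exp (-(c/2) * y^2))) := by ring
  · filter_upwards with y
    intro x _
    have hu : HasDerivAt (fun t : ℝ => 2*c*(y - t)) (-(2*c)) x := by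
      have := ((hasDerivAt_id x).const_sub y).const_mul (2*c)
      exact this.congr_deriv (by ring)
    have hv := (hasDerivAt_exp_part c y x).const_mul (y ^ α)
    have := hu.mul hv
    exact this.congr_deriv (by ring)

lemma ibp {c : ℝ} (hc : 0 < c) {β : ℝ} (hβ : 0 < β) (Δ : ℝ) :
    ∫ y in Ioi (0:ℝ), (β * (y ^ (β - 1) * Real.exp (-c * (y - Δ)^2))
      - 2*c*(y - Δ) * (y ^ β * Real.exp (-c * (y - Δ)^2))) = 0 := by
  have hderiv : ∀ x ∈ Ioi (0:ℝ), HasDerivAt (fun y : ℝ => y ^ β * Real.exp (-c * (y - Δ)^2))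
      (β * (x ^ (β - 1) * Real.exp (-c * (x - Δ)^2))
        - 2*c*(x - Δ) * (x ^ β * Real.exp (-c * (x - Δ)^2))) x := by
    intro x hx
    have h1 : HasDerivAt (fun y : ℝ => -c * (y - Δ)^2) (-(2*c*(x - Δ))) x := by
      have := (((hasDerivAt_id x).sub_const Δ).pow 2).const_mul (-c)
      refine this.congr_deriv ?_
      simp only [id]
      ring
    have h2 := (Real.hasDerivAt_rpow_const (p := β) (Or.inl (ne_of_gt hx))).mul h1.exp
    exact h2.congr_deriv (by ring)
  have f'int : IntegrableOn (fun x : ℝ => β * (x ^ (β - 1) * Real.exp (-c * (x - Δ)^2))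
      - 2*c*(x - Δ) * (x ^ β * Real.exp (-c * (x - Δ)^2))) (Ioi 0) := by
    have h1 := ((integ hc (by linarith : (-1:ℝ) < β - 1) Δ).const_mul β).sub
      ((integ_lin hc (by linarith : (-1:ℝ) < β) Δ Δ).const_mul (2*c))
    refine MeasureTheory.IntegrableOn.congr_fun h1 ?_ measurableSet_Ioi
    intro y _
    simp only [Pi.sub_apply]
    ring
  have hcont : ContinuousWithinAt (fun y : ℝ => y ^ β * Real.exp (-c * (y - Δ)^2)) (Ici 0) 0 :=
    (Real.continuousAt_rpow_const 0 β (Or.inr hβ.le)).continuousWithinAt.mul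
      ((Real.continuous_exp.comp (by continuity)).continuousAt.continuousWithinAt)
  have htend : Tendsto (fun y : ℝ => y ^ β * Real.exp (-c * (y - Δ)^2)) atTop (𝓝 0) := by
    have hg : Tendsto (fun x : ℝ => Real.exp (-(1/2) * x)) atTop (𝓝 0) := by
      have := Real.tendsto_exp_neg_atTop_nhds_zero.comp
        (tendsto_id.const_mul_atTop (by norm_num : (0:ℝ) < 1/2))
      simpa [Function.comp_def, neg_mul] using this
    have hbase : Tendsto (fun y : ℝ => y ^ β * Real.exp (-(c/2) * y^2)) atTop (𝓝 0) :=
      (rpow_mul_exp_neg_mul_sq_isLittleO_exp_neg (half_pos hc) β).tendsto_zero_of_tendsto hg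
    have hbase' : Tendsto (fun y : ℝ => Real.exp (c*Δ^2) * (y ^ β * Real.exp (-(c/2) * y^2)))
        atTop (𝓝 0) := by
      simpa using hbase.const_mul (Real.exp (c*Δ^2))
    refine tendsto_of_tendsto_of_tendsto_of_le_of_le' tendsto_const_nhds hbase' ?_ ?_
    · filter_upwards [eventually_gt_atTop (0:ℝ)] with y hy
      positivity
    · filter_upwards [eventually_gt_atTop (0:ℝ)] with y hy
      calc y ^ β * Real.exp (-c * (y - Δ)^2)
          ≤ y ^ β * (Real.exp (c*Δ^2) * Real.exp (-(c/2) * y^2)) := by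
            refine mul_le_mul_of_nonneg_left ?_ (Real.rpow_nonneg hy.le β)
            simpa [sq_abs] using exp_bound hc (le_refl |Δ|) y
        _ = Real.exp (c*Δ^2) * (y ^ β * Real.exp (-(c/2) * y^2)) := by ring
  have := MeasureTheory.integral_Ioi_of_hasDerivAt_of_tendsto hcont hderiv f'int htend
  rw [this]
  simp [Real.zero_rpow (ne_of_gt hβ)]

end HPC

theorem H_parabolic_cylinder (ρ : ℝ) (hρ : 0 < ρ) (hρ1 : ρ < 1)
    (H : ℝ → ℝ)
    (hH : ∀ Δ : ℝ, H Δ = Real.sqrt ((1 - ρ) / (1 + ρ)) * (1 / Real.sqrt (2 * π)) *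
      ∫ y in Set.Ioi (0:ℝ),
        y ^ (ρ / (1 - ρ)) * Real.exp (-((1 - ρ) / (2 * (1 + ρ))) * (y - Δ)^2)) :
    ∀ Δ : ℝ,
      (1 + ρ) * deriv (deriv H) Δ + (1 - ρ) * Δ * deriv H Δ - ρ * H Δ = 0 := by
  intro Δ
  have h1ρ : (0:ℝ) < 1 - ρ := by linarith
  have h2ρ : (0:ℝ) < 1 + ρ := by linarith
  set c : ℝ := (1 - ρ) / (2 * (1 + ρ)) with hc_def
  set α : ℝ := ρ / (1 - ρ) with hα_def
  have hc : 0 < c := by rw [hc_def]; positivity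
  have hα : 0 < α := by rw [hα_def]; positivity
  set C : ℝ := Real.sqrt ((1 - ρ) / (1 + ρ)) * (1 / Real.sqrt (2 * π)) with hC
  have hHfun : H = fun x => C * ∫ y in Set.Ioi (0:ℝ),
      y ^ α * Real.exp (-c * (y - x)^2) := funext hH
  have hd1 : ∀ x : ℝ, HasDerivAt H
      (C * ∫ y in Set.Ioi (0:ℝ), 2*c*(y - x) * (y ^ α * Real.exp (-c * (y - x)^2))) x := by
    intro x
    rw [hHfun]
    exact ((HPC.app1 hc hα x).2).const_mul C
  have hderivH : deriv H = fun x =>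
      C * ∫ y in Set.Ioi (0:ℝ), 2*c*(y - x) * (y ^ α * Real.exp (-c * (y - x)^2)) :=
    funext fun x => (hd1 x).deriv
  have hd2 : HasDerivAt (deriv H)
      (C * ∫ y in Set.Ioi (0:ℝ), (4*c^2*(y - Δ)^2 - 2*c) * (y ^ α * Real.exp (-c * (y - Δ)^2))) Δ := by
    rw [hderivH]
    exact ((HPC.app2 hc hα Δ).2).const_mul C
  rw [hd2.deriv, hderivH, hH Δ]
  have hKint := (HPC.app2 hc hα Δ).1
  have hGint := (HPC.app1 hc hα Δ).1
  have hFint := HPC.integ hc (by linarith : (-1:ℝ) < α) Δ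
  have inner : (1 + ρ) * (∫ y in Set.Ioi (0:ℝ),
        (4*c^2*(y - Δ)^2 - 2*c) * (y ^ α * Real.exp (-c * (y - Δ)^2)))
      + (1 - ρ) * Δ * (∫ y in Set.Ioi (0:ℝ), 2*c*(y - Δ) * (y ^ α * Real.exp (-c * (y - Δ)^2)))
      - ρ * (∫ y in Set.Ioi (0:ℝ), y ^ α * Real.exp (-c * (y - Δ)^2)) = 0 := by
    rw [← MeasureTheory.integral_const_mul, ← MeasureTheory.integral_const_mul,
      ← MeasureTheory.integral_const_mul, ← MeasureTheory.integral_add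
        (hKint.const_mul _) (hGint.const_mul _)]
    have h12 : Integrable (fun y : ℝ =>
        (1 + ρ) * ((4*c^2*(y - Δ)^2 - 2*c) * (y ^ α * Real.exp (-c * (y - Δ)^2)))
          + (1 - ρ) * Δ * (2*c*(y - Δ) * (y ^ α * Real.exp (-c * (y - Δ)^2))))
        (volume.restrict (Set.Ioi 0)) := (hKint.const_mul _).add (hGint.const_mul _)
    have h3 : Integrable (fun y : ℝ => ρ * (y ^ α * Real.exp (-c * (y - Δ)^2)))
        (volume.restrict (Set.Ioi 0)) := hFint.const_mul _
    rw [← MeasureTheory.integral_sub h12 h3]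
    have hibp := HPC.ibp hc (by linarith : (0:ℝ) < α + 1) Δ
    have hcongr : ∫ y in Set.Ioi (0:ℝ),
        ((1 + ρ) * ((4*c^2*(y - Δ)^2 - 2*c) * (y ^ α * Real.exp (-c * (y - Δ)^2)))
          + (1 - ρ) * Δ * (2*c*(y - Δ) * (y ^ α * Real.exp (-c * (y - Δ)^2)))
          - ρ * (y ^ α * Real.exp (-c * (y - Δ)^2)))
        = ∫ y in Set.Ioi (0:ℝ), (-(1 - ρ)) *
          ((α + 1) * (y ^ (α + 1 - 1) * Real.exp (-c * (y - Δ)^2))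
            - 2*c*(y - Δ) * (y ^ (α + 1) * Real.exp (-c * (y - Δ)^2))) := by
      refine MeasureTheory.setIntegral_congr_fun measurableSet_Ioi ?_
      intro y hy
      have hy0 : (0:ℝ) < y := hy
      have e1 : y ^ (α + 1) = y ^ α * y := Real.rpow_add_one (ne_of_gt hy0) α
      have ne1 : (1 - ρ) ≠ 0 := ne_of_gt h1ρ
      have ne2 : (1 + ρ) ≠ 0 := ne_of_gt h2ρ
      dsimp only
      rw [e1, show α + 1 - 1 = α from by ring, hα_def, hc_def]
      set E := Real.exp (-((1 - ρ) / (2 * (1 + ρ))) * (y - Δ)^2)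
      set A := y ^ (ρ / (1 - ρ))
      field_simp
      ring
    rw [hcongr, MeasureTheory.integral_const_mul, hibp, mul_zero]
  calc (1 + ρ) * (C * ∫ y in Set.Ioi (0:ℝ),
        (4*c^2*(y - Δ)^2 - 2*c) * (y ^ α * Real.exp (-c * (y - Δ)^2)))
      + (1 - ρ) * Δ * (C * ∫ y in Set.Ioi (0:ℝ), 2*c*(y - Δ) * (y ^ α * Real.exp (-c * (y - Δ)^2)))
      - ρ * (C * ∫ y in Set.Ioi (0:ℝ), y ^ α * Real.exp (-c * (y - Δ)^2))
      = C * ((1 + ρ) * (∫ y in Set.Ioi (0:ℝ),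
        (4*c^2*(y - Δ)^2 - 2*c) * (y ^ α * Real.exp (-c * (y - Δ)^2)))
      + (1 - ρ) * Δ * (∫ y in Set.Ioi (0:ℝ), 2*c*(y - Δ) * (y ^ α * Real.exp (-c * (y - Δ)^2)))
      - ρ * (∫ y in Set.Ioi (0:ℝ), y ^ α * Real.exp (-c * (y - Δ)^2))) := by ring
    _ = 0 := by rw [inner, mul_zero]
end

section
/- For ρ ∈ (0,1), the function H(Δ) = sqrt((1−ρ)/(1+ρ))·(1/√(2π))·∫₀^∞ y^{ρ/(1−ρ)} exp(−((1−ρ)/(2(1+ρ)))(y−Δ)²) dy satisfies H(Δ)/Δ^{ρ/(1−ρ)} → 1 as Δ → +∞. -/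
open Real Filter Topology MeasureTheory


lemma integrable_abs_rpow_mul_exp_neg_mul_sq' {b : ℝ} (hb : 0 < b) {s : ℝ} (hs : -1 < s) :
    MeasureTheory.Integrable fun x : ℝ => |x| ^ s * Real.exp (-b * x ^ 2) := by
  rw [← MeasureTheory.integrableOn_univ, ← @Set.Iio_union_Ici _ _ (0 : ℝ),
    MeasureTheory.integrableOn_union]
  constructor
  · rw [← (MeasureTheory.Measure.measurePreserving_neg
        (MeasureTheory.volume : MeasureTheory.Measure ℝ)).integrableOn_comp_preimage
        (Homeomorph.neg ℝ).measurableEmbedding]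
    simp only [Function.comp_def, neg_sq, Set.neg_preimage, Set.neg_Iio, neg_zero, abs_neg]
    exact (integrableOn_rpow_mul_exp_neg_mul_sq hb hs).congr_fun
      (fun x hx => by rw [abs_of_pos hx]) measurableSet_Ioi
  · rw [integrableOn_Ici_iff_integrableOn_Ioi]
    exact (integrableOn_rpow_mul_exp_neg_mul_sq hb hs).congr_fun
      (fun x hx => by rw [abs_of_pos hx]) measurableSet_Ioi

set_option maxHeartbeats 1000000 in
theorem H_asymptotics (ρ : ℝ) (hρ : 0 < ρ) (hρ1 : ρ < 1)
    (H : ℝ → ℝ)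
    (hH : ∀ Δ : ℝ, H Δ = Real.sqrt ((1 - ρ) / (1 + ρ)) * (1 / Real.sqrt (2 * π)) *
      ∫ y in Set.Ioi (0:ℝ),
        y ^ (ρ / (1 - ρ)) * Real.exp (-((1 - ρ) / (2 * (1 + ρ))) * (y - Δ)^2)) :
    Tendsto (fun Δ : ℝ => H Δ / Δ ^ (ρ / (1 - ρ))) atTop (𝓝 1) := by
  have h1ρ : (0:ℝ) < 1 - ρ := by linarith
  have h1ρ' : (0:ℝ) < 1 + ρ := by linarith
  set α := ρ / (1 - ρ) with hαdef
  have hα : 0 < α := div_pos hρ h1ρ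
  set c := (1 - ρ) / (2 * (1 + ρ)) with hcdef
  have hc : 0 < c := div_pos h1ρ (by linarith)
  set K := Real.sqrt ((1 - ρ) / (1 + ρ)) * (1 / Real.sqrt (2 * π)) with hKdef
  -- normalization constant
  have hK1 : K * Real.sqrt (π / c) = 1 := by
    rw [hKdef, hcdef, mul_assoc, one_div, ← Real.sqrt_inv,
      ← Real.sqrt_mul (by positivity), ← Real.sqrt_mul (by positivity)]
    rw [show (1 - ρ) / (1 + ρ) * ((2 * π)⁻¹ * (π / ((1 - ρ) / (2 * (1 + ρ))))) = 1 by
      field_simp]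
    exact Real.sqrt_one
  -- the shifted integrand
  have hgauss : Tendsto (fun Δ : ℝ => ∫ t : ℝ, Set.indicator (Set.Ioi (-Δ))
      (fun t => (1 + t / Δ) ^ α * Real.exp (-c * t ^ 2)) t) atTop
      (𝓝 (∫ t : ℝ, Real.exp (-c * t ^ 2))) := by
    apply tendsto_integral_filter_of_dominated_convergence
      (bound := fun t : ℝ => (1 + |t|) ^ α * Real.exp (-c * t ^ 2))
    · filter_upwards with Δ
      exact ((((continuous_const.add (continuous_id.div_const Δ)).rpow_const
        (fun x => Or.inr hα.le)).mul
        (Real.continuous_exp.comp (continuous_const.mul (continuous_pow 2)))).aestronglyMeasurable).indicator measurableSet_Ioi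
    · filter_upwards [eventually_ge_atTop (1:ℝ)] with Δ hΔ
      filter_upwards with t
      by_cases ht : t ∈ Set.Ioi (-Δ)
      · rw [Set.indicator_of_mem ht]
        have hΔ0 : (0:ℝ) < Δ := by linarith
        have htd : -1 ≤ t / Δ := by
          rw [le_div_iff₀ hΔ0]
          simp only [Set.mem_Ioi] at ht; nlinarith
        have hb : 0 ≤ 1 + t / Δ := by linarith
        have hle : t / Δ ≤ |t| := by
          rcases le_or_gt 0 t with h0 | h0
          · exact le_trans (div_le_self h0 hΔ) (le_abs_self t)
          · exact le_trans (div_nonpos_iff.2 (Or.inr ⟨h0.le, hΔ0.le⟩)) (abs_nonneg t)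
        rw [Real.norm_eq_abs, abs_of_nonneg (by positivity)]
        exact mul_le_mul_of_nonneg_right
          (Real.rpow_le_rpow hb (by linarith) hα.le) (Real.exp_pos _).le
      · rw [Set.indicator_of_notMem ht, norm_zero]
        positivity
    · have hint : Integrable (fun t : ℝ => (2:ℝ)^α * Real.exp (-c * t^2)
          + (2:ℝ)^α * (|t| ^ α * Real.exp (-c * t ^ 2))) :=
        ((integrable_exp_neg_mul_sq hc).const_mul _).add
          ((integrable_abs_rpow_mul_exp_neg_mul_sq' hc (show (-1:ℝ) < α by linarith)).const_mul _)
      apply hint.mono'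
      · exact ((continuous_const.add continuous_abs).rpow_const
          (fun x => Or.inr hα.le)).mul (Real.continuous_exp.comp (continuous_const.mul (continuous_pow 2))) |>.aestronglyMeasurable
      · filter_upwards with t
        have h0 : (0:ℝ) ≤ 1 + |t| := by positivity
        rw [Real.norm_eq_abs, abs_of_nonneg (by positivity)]
        have hkey : (1 + |t|) ^ α ≤ 2^α + 2^α * |t|^α := by
          rcases le_total (|t|) 1 with h | h
          · calc (1+|t|)^α ≤ (2:ℝ)^α := Real.rpow_le_rpow h0 (by linarith) hα.le
              _ ≤ _ := le_add_of_nonneg_right (by positivity)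
          · calc (1+|t|)^α ≤ (2*|t|)^α := Real.rpow_le_rpow h0 (by linarith) hα.le
              _ = 2^α * |t|^α := Real.mul_rpow (by norm_num) (abs_nonneg t)
              _ ≤ _ := le_add_of_nonneg_left (by positivity)
        calc (1+|t|)^α * Real.exp (-c * t^2)
            ≤ (2^α + 2^α * |t|^α) * Real.exp (-c * t^2) :=
              mul_le_mul_of_nonneg_right hkey (Real.exp_pos _).le
          _ = 2^α * Real.exp (-c * t^2) + 2^α * (|t|^α * Real.exp (-c * t^2)) := by ring
    · filter_upwards with t
      have h0 : Tendsto (fun Δ : ℝ => 1 + t / Δ) atTop (𝓝 1) := by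
        have h00 : Tendsto (fun Δ : ℝ => t / Δ) atTop (𝓝 0) := by
          simpa [div_eq_mul_inv] using tendsto_inv_atTop_zero.const_mul t
        have h01 : Tendsto (fun Δ : ℝ => 1 + t / Δ) atTop (𝓝 (1 + 0)) :=
          (tendsto_const_nhds (x := (1:ℝ))).add h00
        simpa using h01
      have h1 : Tendsto (fun Δ : ℝ => (1 + t / Δ) ^ α) atTop (𝓝 1) := by
        have hcont : ContinuousAt (fun x : ℝ => x ^ α) 1 :=
          Real.continuousAt_rpow_const 1 α (Or.inl one_ne_zero)
        have h02 := hcont.tendsto.comp h0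
        simpa [Function.comp_def, Real.one_rpow] using h02
      have h2 : Tendsto (fun Δ : ℝ => (1 + t / Δ) ^ α * Real.exp (-c * t ^ 2)) atTop
          (𝓝 (1 * Real.exp (-c * t^2))) := h1.mul_const _
      rw [one_mul] at h2
      apply h2.congr'
      filter_upwards [eventually_gt_atTop (|t|)] with Δ hΔ
      have : t ∈ Set.Ioi (-Δ) := by
        simp only [Set.mem_Ioi]
        have := neg_abs_le t
        linarith
      rw [Set.indicator_of_mem this]
  -- key identity
  have hkey : ∀ᶠ Δ : ℝ in atTop, H Δ / Δ ^ α = K * ∫ t : ℝ, Set.indicator (Set.Ioi (-Δ))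
      (fun t => (1 + t / Δ) ^ α * Real.exp (-c * t ^ 2)) t := by
    filter_upwards [eventually_gt_atTop (0:ℝ)] with Δ hΔ
    have hΔα : (0:ℝ) < Δ ^ α := Real.rpow_pos_of_pos hΔ _
    have step1 : (∫ y in Set.Ioi (0:ℝ), y ^ α * Real.exp (-c * (y - Δ)^2))
        = Δ ^ α * ∫ t : ℝ, Set.indicator (Set.Ioi (-Δ))
          (fun t => (1 + t / Δ) ^ α * Real.exp (-c * t ^ 2)) t := by
      rw [← MeasureTheory.integral_indicator measurableSet_Ioi,
        ← MeasureTheory.integral_add_right_eq_self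
          (fun y : ℝ => Set.indicator (Set.Ioi (0:ℝ))
            (fun y => y ^ α * Real.exp (-c * (y - Δ)^2)) y) Δ,
        ← MeasureTheory.integral_const_mul]
      congr 1; funext t
      by_cases ht : t ∈ Set.Ioi (-Δ)
      · have ht0 : -Δ < t := ht
        have ht' : t + Δ ∈ Set.Ioi (0:ℝ) := by simp only [Set.mem_Ioi]; linarith
        rw [Set.indicator_of_mem ht', Set.indicator_of_mem ht]
        have htd : -1 ≤ t / Δ := by rw [le_div_iff₀ hΔ]; nlinarith
        have hb : 0 ≤ 1 + t / Δ := by linarith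
        have h1 : t + Δ = Δ * (1 + t / Δ) := by field_simp; ring
        rw [show t + Δ - Δ = t by ring, h1, Real.mul_rpow hΔ.le hb]
        ring
      · have ht0 : ¬ -Δ < t := ht
        have ht' : t + Δ ∉ Set.Ioi (0:ℝ) := by
          simp only [Set.mem_Ioi, not_lt] at *; linarith
        rw [Set.indicator_of_notMem ht', Set.indicator_of_notMem ht, mul_zero]
    rw [hH Δ, step1]
    rw [mul_div_assoc, mul_div_cancel_left₀ _ hΔα.ne']
  have hT := hgauss.const_mul K
  rw [integral_gaussian] at hT
  rw [hK1] at hT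
  exact Tendsto.congr' (hkey.mono fun Δ h => h.symm) hT
end

section
/- The function pair (P₀, P₁) with P₀(ξ,τ) = (1/ξ)e^{−τ/ξ} and P₁(ξ,τ) = [(τ−1)/ξ² + (4τ−τ²)/(2ξ³) − 3τ²/(2ξ⁴) + τ³/(3ξ⁵)]·e^{−τ/ξ} satisfies the PDE ∂P₁/∂τ = ∂²P₀/∂ξ² + (1/ξ − 1)∂P₀/∂ξ + P₀/ξ² − P₁/ξ on ξ > 0, τ > 0, with initial condition P₁(ξ,0) = −1/ξ². -/
open Real

private lemma hExp (ξ τ : ℝ) (hξ : ξ ≠ 0) :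
    HasDerivAt (fun x : ℝ => Real.exp (-τ / x)) (Real.exp (-τ/ξ) * (τ/ξ^2)) ξ := by
  have h1 : HasDerivAt (fun x : ℝ => -τ / x) (τ / ξ^2) ξ := by
    have h := (hasDerivAt_inv hξ).const_mul (-τ)
    simp only [div_eq_mul_inv]
    exact h.congr_deriv (by ring)
  simpa using h1.exp

private lemma hP0d (ξ τ : ℝ) (hξ : ξ ≠ 0) :
    HasDerivAt (fun x : ℝ => 1 / x * Real.exp (-τ / x))
      ((τ/ξ^3 - 1/ξ^2) * Real.exp (-τ/ξ)) ξ := by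
  have h1 : HasDerivAt (fun x : ℝ => 1 / x) (-(ξ^2)⁻¹) ξ := by
    simpa [one_div] using hasDerivAt_inv hξ
  have h := h1.mul (hExp ξ τ hξ)
  exact h.congr_deriv (by ring)

private lemma hcubic (c0 c1 c2 c3 x : ℝ) :
    HasDerivAt (fun t : ℝ => c0 + c1*t + c2*t^2 + c3*t^3)
      (c1 + 2*c2*x + 3*c3*x^2) x := by
  have h1 : HasDerivAt (fun t : ℝ => t) 1 x := hasDerivAt_id x
  have h2 : HasDerivAt (fun t : ℝ => t^2) ((2:ℕ)*x^1) x := hasDerivAt_pow 2 x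
  have h3 : HasDerivAt (fun t : ℝ => t^3) ((3:ℕ)*x^2) x := hasDerivAt_pow 3 x
  have := ((((h1.const_mul c1).const_add c0).add (h2.const_mul c2)).add (h3.const_mul c3))
  exact this.congr_deriv (by push_cast; ring)

theorem P1_pde
    (P0 P1 : ℝ → ℝ → ℝ)
    (hP0 : ∀ ξ τ : ℝ, P0 ξ τ = (1 / ξ) * Real.exp (-τ / ξ))
    (hP1 : ∀ ξ τ : ℝ, P1 ξ τ =
      ((τ - 1) / ξ^2 + (4*τ - τ^2) / (2*ξ^3) - 3*τ^2 / (2*ξ^4) + τ^3 / (3*ξ^5))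
        * Real.exp (-τ / ξ)) :
    (∀ ξ τ : ℝ, 0 < ξ → 0 < τ →
      deriv (fun τ' => P1 ξ τ') τ
        = deriv (fun ξ' => deriv (fun ξ'' => P0 ξ'' τ) ξ') ξ
          + (1 / ξ - 1) * deriv (fun ξ' => P0 ξ' τ) ξ
          + P0 ξ τ / ξ^2 - P1 ξ τ / ξ) ∧
    (∀ ξ : ℝ, 0 < ξ → P1 ξ 0 = -(1 / ξ^2)) := by
  constructor
  · intro ξ τ hξ0 hτ0
    have hξ : ξ ≠ 0 := ne_of_gt hξ0
    set E := Real.exp (-τ/ξ) with hE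
    have hEne : E ≠ 0 := Real.exp_ne_zero _
    -- deriv of P1 in τ
    have hq : HasDerivAt
        (fun τ' : ℝ => (τ' - 1) / ξ^2 + (4*τ' - τ'^2) / (2*ξ^3) - 3*τ'^2 / (2*ξ^4) + τ'^3 / (3*ξ^5))
        (1/ξ^2 + (4 - 2*τ)/(2*ξ^3) - 3*τ/ξ^4 + τ^2/ξ^5) τ := by
      have h := hcubic (-(1/ξ^2)) (1/ξ^2 + 4/(2*ξ^3)) (-(1/(2*ξ^3)) - 3/(2*ξ^4)) (1/(3*ξ^5)) τ
      convert h using 1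
      · funext t; field_simp; ring
      · field_simp; ring
    have hEτ : HasDerivAt (fun τ' : ℝ => Real.exp (-τ' / ξ)) (E * (-(1/ξ))) τ := by
      have h1 : HasDerivAt (fun τ' : ℝ => -τ' / ξ) (-(1/ξ)) τ := by
        simpa [neg_div, Pi.neg_def] using ((hasDerivAt_id τ).div_const ξ).neg
      simpa using h1.exp
    have hP1τ : deriv (fun τ' => P1 ξ τ') τ =
        (1/ξ^2 + (4 - 2*τ)/(2*ξ^3) - 3*τ/ξ^4 + τ^2/ξ^5) * E
          + ((τ - 1) / ξ^2 + (4*τ - τ^2) / (2*ξ^3) - 3*τ^2 / (2*ξ^4) + τ^3 / (3*ξ^5)) * (E * (-(1/ξ))) := by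
      have h := hq.mul hEτ
      have : (fun τ' => P1 ξ τ') = fun τ' =>
          ((τ' - 1) / ξ^2 + (4*τ' - τ'^2) / (2*ξ^3) - 3*τ'^2 / (2*ξ^4) + τ'^3 / (3*ξ^5))
            * Real.exp (-τ' / ξ) := by
        funext τ'; exact hP1 ξ τ'
      rw [this]
      exact h.deriv
    -- first deriv of P0 in ξ
    have hP0ξ : deriv (fun ξ' => P0 ξ' τ) ξ = (τ/ξ^3 - 1/ξ^2) * E := by
      have : (fun ξ' => P0 ξ' τ) = fun ξ' => 1 / ξ' * Real.exp (-τ / ξ') := by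
        funext x; exact hP0 x τ
      rw [this]
      exact (hP0d ξ τ hξ).deriv
    -- second deriv of P0 in ξ
    have hev : (fun ξ' => deriv (fun ξ'' => P0 ξ'' τ) ξ')
        =ᶠ[nhds ξ] (fun ξ' => (τ/ξ'^3 - 1/ξ'^2) * Real.exp (-τ/ξ')) := by
      filter_upwards [eventually_ne_nhds hξ] with x hx
      have : (fun ξ'' => P0 ξ'' τ) = fun ξ'' => 1 / ξ'' * Real.exp (-τ / ξ'') := by
        funext y; exact hP0 y τ
      rw [this]
      exact (hP0d x τ hx).deriv
    have hg : HasDerivAt (fun x : ℝ => (τ/x^3 - 1/x^2) * Real.exp (-τ/x))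
        ((τ * (-(3*ξ^2)/(ξ^3)^2) - (-(2*ξ)/(ξ^2)^2)) * E + (τ/ξ^3 - 1/ξ^2) * (E * (τ/ξ^2))) ξ := by
      have h3 : HasDerivAt (fun x : ℝ => τ / x^3) (τ * (-(3*ξ^2)/(ξ^3)^2)) ξ := by
        have := ((hasDerivAt_pow 3 ξ).inv (pow_ne_zero 3 hξ)).const_mul τ
        simpa [div_eq_mul_inv] using this
      have h2 : HasDerivAt (fun x : ℝ => 1 / x^2) (-(2*ξ)/(ξ^2)^2) ξ := by
        have := (hasDerivAt_pow 2 ξ).inv (pow_ne_zero 2 hξ)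
        simpa [one_div, Pi.inv_def] using this
      exact (h3.sub h2).mul (hExp ξ τ hξ)
    have hP0ξξ : deriv (fun ξ' => deriv (fun ξ'' => P0 ξ'' τ) ξ') ξ
        = (τ * (-(3*ξ^2)/(ξ^3)^2) - (-(2*ξ)/(ξ^2)^2)) * E + (τ/ξ^3 - 1/ξ^2) * (E * (τ/ξ^2)) := by
      rw [hev.deriv_eq]
      exact hg.deriv
    rw [hP1τ, hP0ξξ, hP0ξ, hP0 ξ τ, hP1 ξ τ]
    rw [← hE]
    field_simp
    ring
  · intro ξ hξ0
    have hξ : ξ ≠ 0 := ne_of_gt hξ0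
    rw [hP1 ξ 0]
    simp
    field_simp
end

section
/- For ρ ∈ (0,1), N > 0, T > 0, the function K⁽¹⁾(N,T) = N^{−1 − (1/2)sqrt(1 + 4ρT²/N²)} · K(N/T), for any differentiable function K : (0,∞) → ℝ, satisfies the transport PDE K⁽¹⁾_T = (ρ e^{Θ_N} − e^{−Θ_N}) K⁽¹⁾_N + ((ρ/2)Θ_{NN} e^{Θ_N} + (1/2)Θ_{NN} e^{−Θ_N} − (1/N) e^{−Θ_N}) K⁽¹⁾, where Θ(N,T) = T(−1−ρ+sqrt(N²/T²+4ρ)) + N log[(1/(2ρ))(−N/T + sqrt(N²/T²+4ρ))], if and only if K is arbitrary — i.e., for every differentiable K, K⁽¹⁾ of this form solves the PDE. -/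
open Real

theorem K1_transport_pde (ρ : ℝ) (hρ : 0 < ρ) (hρ1 : ρ < 1)
    (Θ : ℝ → ℝ → ℝ)
    (hΘ : ∀ N T : ℝ, Θ N T =
      T * (-1 - ρ + Real.sqrt (N^2 / T^2 + 4*ρ))
        + N * Real.log ((1 / (2*ρ)) * (-(N / T) + Real.sqrt (N^2 / T^2 + 4*ρ)))) :
    ∀ K : ℝ → ℝ, Differentiable ℝ K →
      ∀ K1 : ℝ → ℝ → ℝ,
        (∀ N T : ℝ, K1 N T =
          N ^ (-1 - (1/2) * Real.sqrt (1 + 4*ρ*T^2 / N^2)) * K (N / T)) →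
        ∀ N T : ℝ, 0 < N → 0 < T →
          deriv (fun T' => K1 N T') T
            = (ρ * Real.exp (deriv (fun N' => Θ N' T) N)
                - Real.exp (-(deriv (fun N' => Θ N' T) N)))
                * deriv (fun N' => K1 N' T) N
              + ((ρ / 2) * deriv (fun N' => deriv (fun N'' => Θ N'' T) N') N
                    * Real.exp (deriv (fun N' => Θ N' T) N)
                  + (1 / 2) * deriv (fun N' => deriv (fun N'' => Θ N'' T) N') N
                    * Real.exp (-(deriv (fun N' => Θ N' T) N))
                  - (1 / N) * Real.exp (-(deriv (fun N' => Θ N' T) N)))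
                * K1 N T := by
  intro K hK K1 hK1 N T hN hT
  have hT0 : T ≠ 0 := ne_of_gt hT
  have hN0 : N ≠ 0 := ne_of_gt hN
  have hρ0 : (2:ℝ) * ρ ≠ 0 := by positivity
  -- basic facts about s x = sqrt (x^2/T^2 + 4ρ)
  have hs_arg_pos : ∀ x : ℝ, 0 < x^2 / T^2 + 4*ρ := fun x => by positivity
  have hs_pos : ∀ x : ℝ, 0 < Real.sqrt (x^2 / T^2 + 4*ρ) :=
    fun x => Real.sqrt_pos.mpr (hs_arg_pos x)
  have hs_sq : ∀ x : ℝ, Real.sqrt (x^2 / T^2 + 4*ρ) ^ 2 = x^2 / T^2 + 4*ρ :=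
    fun x => Real.sq_sqrt (le_of_lt (hs_arg_pos x))
  have hs_gt : ∀ x : ℝ, x / T < Real.sqrt (x^2 / T^2 + 4*ρ) := by
    intro x
    have h1 : Real.sqrt ((x / T)^2) < Real.sqrt (x^2 / T^2 + 4*ρ) := by
      apply Real.sqrt_lt_sqrt (sq_nonneg _)
      rw [div_pow]; linarith
    calc x / T ≤ |x / T| := le_abs_self _
      _ = Real.sqrt ((x / T)^2) := (Real.sqrt_sq_eq_abs _).symm
      _ < _ := h1
  have hg_pos : ∀ x : ℝ, 0 < (1 / (2*ρ)) * (-(x / T) + Real.sqrt (x^2 / T^2 + 4*ρ)) := by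
    intro x
    have := hs_gt x
    have h1 : 0 < -(x / T) + Real.sqrt (x^2 / T^2 + 4*ρ) := by linarith
    positivity
  have hfrac : ∀ x : ℝ, (-(1 / T) + x / (T^2 * Real.sqrt (x^2 / T^2 + 4*ρ)))
      / (-(x / T) + Real.sqrt (x^2 / T^2 + 4*ρ)) = -1 / (T * Real.sqrt (x^2 / T^2 + 4*ρ)) := by
    intro x
    have hsx := hs_pos x
    have hgt := hs_gt x
    set sx := Real.sqrt (x^2 / T^2 + 4*ρ) with hsx_def
    have hne : -(x / T) + sx ≠ 0 := by linarith
    rw [div_eq_div_iff hne (by positivity : T * sx ≠ 0)]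
    field_simp
    ring
  -- derivative of s
  have hS : ∀ x : ℝ, HasDerivAt (fun y : ℝ => Real.sqrt (y^2 / T^2 + 4*ρ))
      (x / (T^2 * Real.sqrt (x^2 / T^2 + 4*ρ))) x := by
    intro x
    have h1 : HasDerivAt (fun y : ℝ => y^2 / T^2 + 4*ρ) (2*x / T^2) x := by
      have := ((hasDerivAt_pow 2 x).div_const (T^2)).add_const (4*ρ)
      simpa [mul_comm] using this
    have h2 := h1.sqrt (ne_of_gt (hs_arg_pos x))
    convert h2 using 1
    have := hs_pos x
    field_simp
  -- derivative of g
  have hG : ∀ x : ℝ, HasDerivAt (fun y : ℝ => (1 / (2*ρ)) * (-(y / T) + Real.sqrt (y^2 / T^2 + 4*ρ)))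
      ((1 / (2*ρ)) * (-(1 / T) + x / (T^2 * Real.sqrt (x^2 / T^2 + 4*ρ)))) x := by
    intro x
    have h1 : HasDerivAt (fun y : ℝ => -(y / T)) (-(1/T)) x := by
      have h0 : HasDerivAt (fun y : ℝ => y / T) (1 / T) x := (hasDerivAt_id x).div_const T
      exact h0.neg
    exact (h1.add (hS x)).const_mul _
  -- first derivative of Θ in N
  have hΘd : ∀ x : ℝ, HasDerivAt (fun y => Θ y T)
      (Real.log ((1 / (2*ρ)) * (-(x / T) + Real.sqrt (x^2 / T^2 + 4*ρ)))) x := by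
    intro x
    have hgx := ne_of_gt (hg_pos x)
    have h1 : HasDerivAt (fun y : ℝ => T * (-1 - ρ + Real.sqrt (y^2 / T^2 + 4*ρ)))
        (T * (x / (T^2 * Real.sqrt (x^2 / T^2 + 4*ρ)))) x := ((hS x).const_add (-1 - ρ)).const_mul T
    have h2 := (hG x).log hgx
    have h3 := (hasDerivAt_id x).mul h2
    have h4 := h1.add h3
    have hfun : (fun y => Θ y T) = fun y : ℝ =>
        T * (-1 - ρ + Real.sqrt (y^2 / T^2 + 4*ρ))
          + y * Real.log ((1 / (2*ρ)) * (-(y / T) + Real.sqrt (y^2 / T^2 + 4*ρ))) :=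
      funext fun y => hΘ y T
    rw [hfun]
    refine h4.congr_deriv ?_
    have hsx := hs_pos x
    rw [mul_div_mul_left _ _ (by positivity : (1:ℝ) / (2*ρ) ≠ 0), hfrac x]
    simp only [id_eq]
    have hsx0 : Real.sqrt (x^2 / T^2 + 4*ρ) ≠ 0 := ne_of_gt hsx
    field_simp
    ring
  have hΘN : deriv (fun N' => Θ N' T) N
      = Real.log ((1 / (2*ρ)) * (-(N / T) + Real.sqrt (N^2 / T^2 + 4*ρ))) := (hΘd N).deriv
  have hΘfun : deriv (fun N' => Θ N' T)
      = fun x => Real.log ((1 / (2*ρ)) * (-(x / T) + Real.sqrt (x^2 / T^2 + 4*ρ))) :=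
    funext fun x => (hΘd x).deriv
  -- second derivative of Θ in N
  have hΘNN : deriv (fun N' => deriv (fun N'' => Θ N'' T) N') N
      = -1 / (T * Real.sqrt (N^2 / T^2 + 4*ρ)) := by
    have h2 := (hG N).log (ne_of_gt (hg_pos N))
    have heq : (fun N' => deriv (fun N'' => Θ N'' T) N')
        = fun x => Real.log ((1 / (2*ρ)) * (-(x / T) + Real.sqrt (x^2 / T^2 + 4*ρ))) := by
      funext x; exact (hΘd x).deriv
    rw [heq, h2.deriv]
    rw [mul_div_mul_left _ _ (by positivity : (1:ℝ) / (2*ρ) ≠ 0), hfrac N]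
  -- σ facts
  have hσ_arg_pos : (0:ℝ) < 1 + 4*ρ*T^2 / N^2 := by positivity
  have hσ : Real.sqrt (1 + 4*ρ*T^2 / N^2) = T * Real.sqrt (N^2 / T^2 + 4*ρ) / N := by
    rw [show 1 + 4*ρ*T^2 / N^2 = (T * Real.sqrt (N^2 / T^2 + 4*ρ) / N)^2 by
      rw [div_pow, mul_pow, hs_sq N]; field_simp]
    exact Real.sqrt_sq (by positivity)
  have hσ_pos : (0:ℝ) < Real.sqrt (1 + 4*ρ*T^2 / N^2) := Real.sqrt_pos.mpr hσ_arg_pos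
  -- derivative of K1 in T
  have hKd : HasDerivAt K (deriv K (N / T)) (N / T) := (hK (N / T)).hasDerivAt
  have hargT : HasDerivAt (fun t : ℝ => 1 + 4*ρ*t^2 / N^2) (4*ρ*(2*T) / N^2) T := by
    have := (((hasDerivAt_pow 2 T).const_mul (4*ρ)).div_const (N^2)).const_add 1
    simpa [mul_comm, mul_assoc] using this
  have heT : HasDerivAt (fun t : ℝ => -1 - (1/2) * Real.sqrt (1 + 4*ρ*t^2 / N^2))
      (-((1/2) * (4*ρ*(2*T) / N^2 / (2 * Real.sqrt (1 + 4*ρ*T^2 / N^2))))) T := by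
    exact ((hargT.sqrt (ne_of_gt hσ_arg_pos)).const_mul (1/2)).const_sub (-1)
  have hNtT : HasDerivAt (fun t : ℝ => N / t) (-(N / T^2)) T := by
    have h := (hasDerivAt_inv hT0).const_mul N
    have hfun : (fun t : ℝ => N / t) = fun t : ℝ => N * t⁻¹ := by
      funext t; rw [div_eq_mul_inv]
    rw [hfun]
    refine h.congr_deriv ?_
    ring
  have hKT : HasDerivAt (fun t : ℝ => K (N / t)) (deriv K (N / T) * -(N / T^2)) T := by
    have hKd' : HasDerivAt K (deriv K (N / T)) ((fun t : ℝ => N / t) T) := hKd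
    exact hKd'.comp T hNtT
  have hK1T : deriv (fun T' => K1 N T') T
      = Real.exp (Real.log N * (-1 - (1/2) * Real.sqrt (1 + 4*ρ*T^2 / N^2)))
          * (Real.log N * -((1/2) * (4*ρ*(2*T) / N^2 / (2 * Real.sqrt (1 + 4*ρ*T^2 / N^2)))))
          * K (N / T)
        + Real.exp (Real.log N * (-1 - (1/2) * Real.sqrt (1 + 4*ρ*T^2 / N^2)))
          * (deriv K (N / T) * -(N / T^2)) := by
    have hfun : (fun T' => K1 N T')
        = fun T' => Real.exp (Real.log N * (-1 - (1/2) * Real.sqrt (1 + 4*ρ*T'^2 / N^2)))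
            * K (N / T') := by
      funext t; rw [hK1, Real.rpow_def_of_pos hN]
    rw [hfun]
    have hE := (heT.const_mul (Real.log N)).exp
    have := hE.mul hKT
    exact this.deriv
  -- derivative of K1 in N
  have hargN : HasDerivAt (fun x : ℝ => 1 + 4*ρ*T^2 / x^2)
      (4*ρ*T^2 * (-(2*N) / (N^2)^2)) N := by
    have h2 : HasDerivAt (fun x : ℝ => x^2) (2*N) N := by simpa [mul_comm] using hasDerivAt_pow 2 N
    have hinv := h2.inv (pow_ne_zero 2 hN0)
    have h3 := (hinv.const_mul (4*ρ*T^2)).const_add 1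
    have hfun : (fun x : ℝ => 1 + 4*ρ*T^2 / x^2) = fun x : ℝ => 1 + 4*ρ*T^2 * (x^2)⁻¹ := by
      funext x; rw [div_eq_mul_inv]
    rw [hfun]
    exact h3
  have heN : HasDerivAt (fun x : ℝ => -1 - (1/2) * Real.sqrt (1 + 4*ρ*T^2 / x^2))
      (-((1/2) * (4*ρ*T^2 * (-(2*N) / (N^2)^2) / (2 * Real.sqrt (1 + 4*ρ*T^2 / N^2))))) N :=
    ((hargN.sqrt (ne_of_gt hσ_arg_pos)).const_mul (1/2)).const_sub (-1)
  have hlogN : HasDerivAt Real.log N⁻¹ N := Real.hasDerivAt_log hN0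
  have hmulN : HasDerivAt (fun x : ℝ => Real.log x * (-1 - (1/2) * Real.sqrt (1 + 4*ρ*T^2 / x^2)))
      (N⁻¹ * (-1 - (1/2) * Real.sqrt (1 + 4*ρ*T^2 / N^2))
        + Real.log N * -((1/2) * (4*ρ*T^2 * (-(2*N) / (N^2)^2) / (2 * Real.sqrt (1 + 4*ρ*T^2 / N^2))))) N :=
    hlogN.mul heN
  have hxT : HasDerivAt (fun x : ℝ => x / T) (1 / T) N := by
    simpa using (hasDerivAt_id N).div_const T
  have hKN : HasDerivAt (fun x : ℝ => K (x / T)) (deriv K (N / T) * (1 / T)) N := by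
    have hKd' : HasDerivAt K (deriv K (N / T)) ((fun x : ℝ => x / T) N) := hKd
    exact hKd'.comp N hxT
  have hK1N : deriv (fun N' => K1 N' T) N
      = Real.exp (Real.log N * (-1 - (1/2) * Real.sqrt (1 + 4*ρ*T^2 / N^2)))
          * (N⁻¹ * (-1 - (1/2) * Real.sqrt (1 + 4*ρ*T^2 / N^2))
             + Real.log N * -((1/2) * (4*ρ*T^2 * (-(2*N) / (N^2)^2) / (2 * Real.sqrt (1 + 4*ρ*T^2 / N^2)))))
          * K (N / T)
        + Real.exp (Real.log N * (-1 - (1/2) * Real.sqrt (1 + 4*ρ*T^2 / N^2)))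
          * (deriv K (N / T) * (1 / T)) := by
    have hE := hmulN.exp
    have hprod := hE.mul hKN
    have hev : (fun x : ℝ => Real.exp (Real.log x * (-1 - (1/2) * Real.sqrt (1 + 4*ρ*T^2 / x^2)))
          * K (x / T)) =ᶠ[nhds N] (fun N' => K1 N' T) := by
      filter_upwards [eventually_gt_nhds hN] with x hx
      rw [hK1, Real.rpow_def_of_pos hx]
    have := (hprod.congr_of_eventuallyEq hev.symm).deriv
    rw [this]
  -- assemble
  rw [hK1T, hK1N, hΘNN, hΘN, hK1 N T, Real.rpow_def_of_pos hN, hσ]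
  rw [Real.exp_log (hg_pos N), Real.exp_neg, Real.exp_log (hg_pos N)]
  set s := Real.sqrt (N^2 / T^2 + 4*ρ) with hs_def
  have hs0 : 0 < s := hs_pos N
  have hsq : s^2 = N^2 / T^2 + 4*ρ := hs_sq N
  have hgt : N / T < s := hs_gt N
  have hgne : -(N / T) + s ≠ 0 := by linarith
  set E := Real.exp (Real.log N * (-1 - 1/2 * (T * s / N))) with hE_def
  set k := K (N / T) with hk_def
  set k' := deriv K (N / T) with hk'_def
  set L := Real.log N with hL_def
  have hsq' : s^2 * T^2 = N^2 + 4*ρ*T^2 := by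
    rw [hsq]; field_simp
  have hginv : (1 / (2*ρ) * (-(N / T) + s))⁻¹ = (N / T + s) / 2 := by
    apply inv_eq_of_mul_eq_one_right
    field_simp
    ring_nf
    linear_combination hsq'
  rw [hginv]
  field_simp
  ring_nf
end
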